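/- arXiv:2010.01130 — 2 statements merged into one kernel-verified Lean document; each statement's English description precedes it below -/
import Mathlib

section
/- With k, K, R and the Sugiyama–Yasuda symbol SY as in the context: for all f, g, h ∈ R, SY(f, g) + SY(g, h) = SY(f, h) in Ω_{K/k}. (Cocycle/additivity property of the Sugiyama–Yasuda symbol.) -/
set_option maxHeartbeats 1600000
set_option synthInstance.maxHeartbeats 400000
set_option linter.unusedSectionVars false
set_option linter.unnecessarySimpa false
set_option linter.unusedVariables false


open IntermediateField

/-- The subfield `k(K²)` of `K` generated by (the image of) `k` and all squares. -/
def kSq (k K : Type*) [Field k] [Field K] [Algebra k K] : IntermediateField k K :=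
  IntermediateField.adjoin k {x : K | ∃ y : K, x = y ^ 2}

/-- The subfield `k(K⁴)` of `K` generated by (the image of) `k` and all fourth
powers. -/
def kFour (k K : Type*) [Field k] [Field K] [Algebra k K] : IntermediateField k K :=
  IntermediateField.adjoin k {x : K | ∃ y : K, x = y ^ 4}

/-- `SYWitness k K ι f g s` records that `s ∈ K` computes the Sugiyama–Yasuda symbol
`SY(f, g) = s • dg`: writing (inside a perfect closure `L` of `K`, via the embedding
`ι : K → L`) `f = f₀⁴ + f₁⁴ g + f₂⁴ g² + f₃⁴ g³` with `f₀, f₁, f₂, f₃` in the subfield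
`M = k^{1/4}·K = {x : L | x⁴ ∈ ι(k(K⁴))}`, one has
`s = ((f₁f₃ + f₂²)/(f₁² + f₃² g))²`.  (The decomposition, and hence `s`, exists and is
unique; here it is recorded as a predicate.) -/
def SYWitness (k K L : Type*) [Field k] [Field K] [Algebra k K] [Field L]
    (ι : K →+* L) (f g s : K) : Prop :=
  ∃ f0 f1 f2 f3 : L,
    f0 ^ 4 ∈ ι '' (kFour k K : Set K) ∧ f1 ^ 4 ∈ ι '' (kFour k K : Set K) ∧
    f2 ^ 4 ∈ ι '' (kFour k K : Set K) ∧ f3 ^ 4 ∈ ι '' (kFour k K : Set K) ∧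
    ι f = f0 ^ 4 + f1 ^ 4 * ι g + f2 ^ 4 * (ι g) ^ 2 + f3 ^ 4 * (ι g) ^ 3 ∧
    f1 ^ 2 + f3 ^ 2 * ι g ≠ 0 ∧
    ι s = ((f1 * f3 + f2 ^ 2) / (f1 ^ 2 + f3 ^ 2 * ι g)) ^ 2

namespace SYaux

/-! ### Generic char-2 polynomial identities -/

theorem I2 {R : Type*} [CommRing R] (h2 : (2:R) = 0) (f1 f3 g0 g1 g2 g3 H : R) :
    (f1*g1 + f3*((g0^2+g2^2*H)*g1 + (g1^2+g3^2*H)*g3*H))^2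
      + (f1*g3 + f3*((g0^2+g2^2*H)*g3 + (g1^2+g3^2*H)*g1))^2 * H =
    (f1^2 + f3^2*(g0^4+g1^4*H+g2^4*H^2+g3^4*H^3)) * (g1^2+g3^2*H) := by
  linear_combination (2*f3^2*g1*g2^2*g3^3*H^3 + f3^2*g1^2*g3^4*H^3 + 2*f3^2*g1^3*g2^2*g3*H^2 + f3^2*g1^4*g3^2*H^2 + f3^2*g0^2*g2^2*g3^2*H^2 + 2*f3^2*g0^2*g1*g3^3*H^2 + f3^2*g0^2*g1^2*g2^2*H + 2*f3^2*g0^2*g1^3*g3*H + f1*f3*g2^2*g3^2*H^2 + 2*f1*f3*g1*g3^3*H^2 + f1*f3*g1^2*g2^2*H + 2*f1*f3*g1^3*g3*H + f1*f3*g0^2*g3^2*H + f1*f3*g0^2*g1^2) * h2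

theorem I3 {R : Type*} [CommRing R] (h2 : (2:R) = 0) (f1 f2 f3 g0 g1 g2 g3 H : R) :
    (f1*g1 + f3*((g0^2+g2^2*H)*g1 + (g1^2+g3^2*H)*g3*H))
      * (f1*g3 + f3*((g0^2+g2^2*H)*g3 + (g1^2+g3^2*H)*g1))
      + (f1*g2 + f2*(g1^2+g3^2*H) + f3*((g0^2+g2^2*H)*g2 + (g1^2+g3^2*H)*g0))^2 =
    (f1*f3 + f2^2)*(g1^2+g3^2*H)^2
      + (g1*g3 + g2^2)*(f1^2 + f3^2*(g0^4+g1^4*H+g2^4*H^2+g3^4*H^3)) := by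
  linear_combination (f3^2*g1^2*g2^2*g3^2*H^2 + f3^2*g1^3*g3^3*H^2 + f3^2*g0*g2^3*g3^2*H^2 + f3^2*g0*g1^2*g2^3*H + f3^2*g0^2*g3^4*H^2 + f3^2*g0^2*g2^4*H + f3^2*g0^2*g1*g2^2*g3*H + 2*f3^2*g0^2*g1^2*g3^2*H + f3^2*g0^2*g1^4 + f3^2*g0^3*g2*g3^2*H + f3^2*g0^3*g1^2*g2 + f2*f3*g2^3*g3^2*H^2 + f2*f3*g1^2*g2^3*H + f2*f3*g0*g3^4*H^2 + 2*f2*f3*g0*g1^2*g3^2*H + f2*f3*g0*g1^4 + f2*f3*g0^2*g2*g3^2*H + f2*f3*g0^2*g1^2*g2 + f1*f3*g2^4*H + f1*f3*g1*g2^2*g3*H + f1*f3*g0*g2*g3^2*H + f1*f3*g0*g1^2*g2 + f1*f3*g0^2*g2^2 + f1*f3*g0^2*g1*g3 + f1*f2*g2*g3^2*H + f1*f2*g1^2*g2) * h2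

theorem I1 {R : Type*} [CommRing R] (h2 : (2:R) = 0) (f0 f1 f2 f3 g0 g1 g2 g3 H : R) :
    f0^4 + f1^4*(g0^4+g1^4*H+g2^4*H^2+g3^4*H^3) + f2^4*(g0^4+g1^4*H+g2^4*H^2+g3^4*H^3)^2
      + f3^4*(g0^4+g1^4*H+g2^4*H^2+g3^4*H^3)^3 =
    (f0 + f1*g0 + f2*(g0^2+g2^2*H) + f3*((g0^2+g2^2*H)*g0 + (g1^2+g3^2*H)*g2*H))^4
    + (f1*g1 + f3*((g0^2+g2^2*H)*g1 + (g1^2+g3^2*H)*g3*H))^4 * H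
    + (f1*g2 + f2*(g1^2+g3^2*H) + f3*((g0^2+g2^2*H)*g2 + (g1^2+g3^2*H)*g0))^4 * H^2
    + (f1*g3 + f3*((g0^2+g2^2*H)*g3 + (g1^2+g3^2*H)*g1))^4 * H^3 := by
  linear_combination (f3^4*g2^4*g3^8*H^8 + f3^4*g2^8*g3^4*H^7 + (-2)*f3^4*g1*g2^2*g3^9*H^8 + (-2)*f3^4*g1*g2^6*g3^5*H^7 + (-2)*f3^4*g1^2*g3^10*H^8 + (-8)*f3^4*g1^2*g2^4*g3^6*H^7 + (-8)*f3^4*g1^3*g2^2*g3^7*H^7 + (-4)*f3^4*g1^3*g2^6*g3^3*H^6 + (-2)*f3^4*g1^4*g3^8*H^7 + (-12)*f3^4*g1^4*g2^4*g3^4*H^6 + f3^4*g1^4*g2^8*H^5 + (-12)*f3^4*g1^5*g2^2*g3^5*H^6 + (-2)*f3^4*g1^5*g2^6*g3*H^5 + (-4)*f3^4*g1^6*g3^6*H^6 + (-8)*f3^4*g1^6*g2^4*g3^2*H^5 + (-8)*f3^4*g1^7*g2^2*g3^3*H^5 + (-2)*f3^4*g1^8*g3^4*H^5 + f3^4*g1^8*g2^4*H^4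 + (-2)*f3^4*g1^9*g2^2*g3*H^4 + (-2)*f3^4*g1^10*g3^2*H^4 + (-2)*f3^4*g0*g2^5*g3^6*H^7 + (-2)*f3^4*g0*g2^9*g3^2*H^6 + (-6)*f3^4*g0*g1^2*g2^5*g3^4*H^6 + (-2)*f3^4*g0*g1^2*g2^9*H^5 + (-6)*f3^4*g0*g1^4*g2^5*g3^2*H^5 + (-2)*f3^4*g0*g1^6*g2^5*H^4 + (-8)*f3^4*g0^2*g2^6*g3^4*H^6 + (-2)*f3^4*g0^2*g2^10*H^5 + (-2)*f3^4*g0^2*g1*g3^9*H^7 + (-6)*f3^4*g0^2*g1*g2^4*g3^5*H^6 + (-12)*f3^4*g0^2*g1^2*g2^2*g3^6*H^6 + (-12)*f3^4*g0^2*g1^2*g2^6*g3^2*H^5 + (-8)*f3^4*g0^2*g1^3*g3^7*H^6 + (-12)*f3^4*g0^2*g1^3*g2^4*g3^3*H^5 + (-24)*f3^4*g0^2*g1^4*g2^2*g3^4*H^5 + (-8)*f3^4*g0^2*g1^4*g2^6*H^4 + (-12)*f3^4*g0^2*g1^5*g3^5*H^5 + (-6)*f3^4*g0^2*g1^5*g2^4*g3*H^4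 + (-12)*f3^4*g0^2*g1^6*g2^2*g3^2*H^4 + (-8)*f3^4*g0^2*g1^7*g3^3*H^4 + (-2)*f3^4*g0^2*g1^9*g3*H^3 + (-4)*f3^4*g0^3*g2^3*g3^6*H^6 + (-8)*f3^4*g0^3*g2^7*g3^2*H^5 + (-12)*f3^4*g0^3*g1^2*g2^3*g3^4*H^5 + (-8)*f3^4*g0^3*g1^2*g2^7*H^4 + (-12)*f3^4*g0^3*g1^4*g2^3*g3^2*H^4 + (-4)*f3^4*g0^3*g1^6*g2^3*H^3 + f3^4*g0^4*g3^8*H^6 + (-12)*f3^4*g0^4*g2^4*g3^4*H^5 + (-2)*f3^4*g0^4*g2^8*H^4 + (-6)*f3^4*g0^4*g1*g2^2*g3^5*H^5 + (-8)*f3^4*g0^4*g1^2*g3^6*H^5 + (-24)*f3^4*g0^4*g1^2*g2^4*g3^2*H^4 + (-12)*f3^4*g0^4*g1^3*g2^2*g3^3*H^4 + (-12)*f3^4*g0^4*g1^4*g3^4*H^4 + (-12)*f3^4*g0^4*g1^4*g2^4*H^3 + (-6)*f3^4*g0^4*g1^5*g2^2*g3*H^3 + (-8)*f3^4*g0^4*g1^6*g3^2*H^3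 + f3^4*g0^4*g1^8*H^2 + (-2)*f3^4*g0^5*g2*g3^6*H^5 + (-12)*f3^4*g0^5*g2^5*g3^2*H^4 + (-6)*f3^4*g0^5*g1^2*g2*g3^4*H^4 + (-12)*f3^4*g0^5*g1^2*g2^5*H^3 + (-6)*f3^4*g0^5*g1^4*g2*g3^2*H^3 + (-2)*f3^4*g0^5*g1^6*g2*H^2 + (-8)*f3^4*g0^6*g2^2*g3^4*H^4 + (-4)*f3^4*g0^6*g2^6*H^3 + (-2)*f3^4*g0^6*g1*g3^5*H^4 + (-12)*f3^4*g0^6*g1^2*g2^2*g3^2*H^3 + (-4)*f3^4*g0^6*g1^3*g3^3*H^3 + (-8)*f3^4*g0^6*g1^4*g2^2*H^2 + (-2)*f3^4*g0^6*g1^5*g3*H^2 + (-8)*f3^4*g0^7*g2^3*g3^2*H^3 + (-8)*f3^4*g0^7*g1^2*g2^3*H^2 + f3^4*g0^8*g3^4*H^3 + (-2)*f3^4*g0^8*g2^4*H^2 + f3^4*g0^8*g1^4*H + (-2)*f3^4*g0^9*g2*g3^2*H^2 + (-2)*f3^4*g0^9*g1^2*g2*H + (-2)*f3^4*g0^10*g2^2*H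 + (-2)*f2*f3^3*g2^5*g3^6*H^7 + (-2)*f2*f3^3*g2^9*g3^2*H^6 + (-6)*f2*f3^3*g1^2*g2^5*g3^4*H^6 + (-2)*f2*f3^3*g1^2*g2^9*H^5 + (-6)*f2*f3^3*g1^4*g2^5*g3^2*H^5 + (-2)*f2*f3^3*g1^6*g2^5*H^4 + (-12)*f2*f3^3*g0*g2^6*g3^4*H^6 + (-24)*f2*f3^3*g0*g1^2*g2^6*g3^2*H^5 + (-12)*f2*f3^3*g0*g1^4*g2^6*H^4 + (-8)*f2*f3^3*g0^2*g2^3*g3^6*H^6 + (-12)*f2*f3^3*g0^2*g2^7*g3^2*H^5 + (-24)*f2*f3^3*g0^2*g1^2*g2^3*g3^4*H^5 + (-12)*f2*f3^3*g0^2*g1^2*g2^7*H^4 + (-24)*f2*f3^3*g0^2*g1^4*g2^3*g3^2*H^4 + (-8)*f2*f3^3*g0^2*g1^6*g2^3*H^3 + (-2)*f2*f3^3*g0^3*g3^8*H^6 + (-24)*f2*f3^3*g0^3*g2^4*g3^4*H^5 + (-2)*f2*f3^3*g0^3*g2^8*H^4 + (-8)*f2*f3^3*g0^3*g1^2*g3^6*H^5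 + (-48)*f2*f3^3*g0^3*g1^2*g2^4*g3^2*H^4 + (-12)*f2*f3^3*g0^3*g1^4*g3^4*H^4 + (-24)*f2*f3^3*g0^3*g1^4*g2^4*H^3 + (-8)*f2*f3^3*g0^3*g1^6*g3^2*H^3 + (-2)*f2*f3^3*g0^3*g1^8*H^2 + (-6)*f2*f3^3*g0^4*g2*g3^6*H^5 + (-24)*f2*f3^3*g0^4*g2^5*g3^2*H^4 + (-18)*f2*f3^3*g0^4*g1^2*g2*g3^4*H^4 + (-24)*f2*f3^3*g0^4*g1^2*g2^5*H^3 + (-18)*f2*f3^3*g0^4*g1^4*g2*g3^2*H^3 + (-6)*f2*f3^3*g0^4*g1^6*g2*H^2 + (-12)*f2*f3^3*g0^5*g2^2*g3^4*H^4 + (-8)*f2*f3^3*g0^5*g2^6*H^3 + (-24)*f2*f3^3*g0^5*g1^2*g2^2*g3^2*H^3 + (-12)*f2*f3^3*g0^5*g1^4*g2^2*H^2 + (-20)*f2*f3^3*g0^6*g2^3*g3^2*H^3 + (-20)*f2*f3^3*g0^6*g1^2*g2^3*H^2 + (-12)*f2*f3^3*g0^7*g2^4*H^2 + (-6)*f2*f3^3*g0^8*g2*g3^2*H^2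 + (-6)*f2*f3^3*g0^8*g1^2*g2*H + (-8)*f2*f3^3*g0^9*g2^2*H + (-2)*f2*f3^3*g0^11 + (-6)*f2^2*f3^2*g2^6*g3^4*H^6 + (-12)*f2^2*f3^2*g1^2*g2^6*g3^2*H^5 + (-6)*f2^2*f3^2*g1^4*g2^6*H^4 + (-6)*f2^2*f3^2*g0*g2^3*g3^6*H^6 + (-6)*f2^2*f3^2*g0*g2^7*g3^2*H^5 + (-18)*f2^2*f3^2*g0*g1^2*g2^3*g3^4*H^5 + (-6)*f2^2*f3^2*g0*g1^2*g2^7*H^4 + (-18)*f2^2*f3^2*g0*g1^4*g2^3*g3^2*H^4 + (-6)*f2^2*f3^2*g0*g1^6*g2^3*H^3 + (-3)*f2^2*f3^2*g0^2*g3^8*H^6 + (-12)*f2^2*f3^2*g0^2*g2^4*g3^4*H^5 + (-3)*f2^2*f3^2*g0^2*g2^8*H^4 + (-12)*f2^2*f3^2*g0^2*g1^2*g3^6*H^5 + (-24)*f2^2*f3^2*g0^2*g1^2*g2^4*g3^2*H^4 + (-18)*f2^2*f3^2*g0^2*g1^4*g3^4*H^4 + (-12)*f2^2*f3^2*g0^2*g1^4*g2^4*H^3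 + (-12)*f2^2*f3^2*g0^2*g1^6*g3^2*H^3 + (-3)*f2^2*f3^2*g0^2*g1^8*H^2 + (-6)*f2^2*f3^2*g0^3*g2*g3^6*H^5 + (-18)*f2^2*f3^2*g0^3*g2^5*g3^2*H^4 + (-18)*f2^2*f3^2*g0^3*g1^2*g2*g3^4*H^4 + (-18)*f2^2*f3^2*g0^3*g1^2*g2^5*H^3 + (-18)*f2^2*f3^2*g0^3*g1^4*g2*g3^2*H^3 + (-6)*f2^2*f3^2*g0^3*g1^6*g2*H^2 + (-6)*f2^2*f3^2*g0^4*g2^2*g3^4*H^4 + (-12)*f2^2*f3^2*g0^4*g2^6*H^3 + (-12)*f2^2*f3^2*g0^4*g1^2*g2^2*g3^2*H^3 + (-6)*f2^2*f3^2*g0^4*g1^4*g2^2*H^2 + (-18)*f2^2*f3^2*g0^5*g2^3*g3^2*H^3 + (-18)*f2^2*f3^2*g0^5*g1^2*g2^3*H^2 + (-18)*f2^2*f3^2*g0^6*g2^4*H^2 + (-6)*f2^2*f3^2*g0^7*g2*g3^2*H^2 + (-6)*f2^2*f3^2*g0^7*g1^2*g2*H + (-12)*f2^2*f3^2*g0^8*g2^2*H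 + (-3)*f2^2*f3^2*g0^10 + (-2)*f2^3*f3*g2^3*g3^6*H^6 + (-2)*f2^3*f3*g2^7*g3^2*H^5 + (-6)*f2^3*f3*g1^2*g2^3*g3^4*H^5 + (-2)*f2^3*f3*g1^2*g2^7*H^4 + (-6)*f2^3*f3*g1^4*g2^3*g3^2*H^4 + (-2)*f2^3*f3*g1^6*g2^3*H^3 + (-2)*f2^3*f3*g0*g3^8*H^6 + (-2)*f2^3*f3*g0*g2^8*H^4 + (-8)*f2^3*f3*g0*g1^2*g3^6*H^5 + (-12)*f2^3*f3*g0*g1^4*g3^4*H^4 + (-8)*f2^3*f3*g0*g1^6*g3^2*H^3 + (-2)*f2^3*f3*g0*g1^8*H^2 + (-2)*f2^3*f3*g0^2*g2*g3^6*H^5 + (-6)*f2^3*f3*g0^2*g2^5*g3^2*H^4 + (-6)*f2^3*f3*g0^2*g1^2*g2*g3^4*H^4 + (-6)*f2^3*f3*g0^2*g1^2*g2^5*H^3 + (-6)*f2^3*f3*g0^2*g1^4*g2*g3^2*H^3 + (-2)*f2^3*f3*g0^2*g1^6*g2*H^2 + (-8)*f2^3*f3*g0^3*g2^6*H^3 +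 (-6)*f2^3*f3*g0^4*g2^3*g3^2*H^3 + (-6)*f2^3*f3*g0^4*g1^2*g2^3*H^2 + (-12)*f2^3*f3*g0^5*g2^4*H^2 + (-2)*f2^3*f3*g0^6*g2*g3^2*H^2 + (-2)*f2^3*f3*g0^6*g1^2*g2*H + (-8)*f2^3*f3*g0^7*g2^2*H + (-2)*f2^3*f3*g0^9 + f2^4*g2^4*g3^4*H^5 + (-2)*f2^4*g1^2*g3^6*H^5 + (-2)*f2^4*g1^4*g3^4*H^4 + f2^4*g1^4*g2^4*H^3 + (-2)*f2^4*g1^6*g3^2*H^3 + (-2)*f2^4*g0^2*g2^6*H^3 + f2^4*g0^4*g3^4*H^3 + (-2)*f2^4*g0^4*g2^4*H^2 + f2^4*g0^4*g1^4*H + (-2)*f2^4*g0^6*g2^2*H + (-2)*f1*f3^3*g2^6*g3^4*H^6 + (-2)*f1*f3^3*g2^10*H^5 + (-2)*f1*f3^3*g1*g3^9*H^7 + (-6)*f1*f3^3*g1*g2^4*g3^5*H^6 + (-12)*f1*f3^3*g1^2*g2^2*g3^6*H^6 + (-8)*f1*f3^3*g1^3*g3^7*H^6 + (-12)*f1*f3^3*g1^3*g2^4*g3^3*H^5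 + (-24)*f1*f3^3*g1^4*g2^2*g3^4*H^5 + (-2)*f1*f3^3*g1^4*g2^6*H^4 + (-12)*f1*f3^3*g1^5*g3^5*H^5 + (-6)*f1*f3^3*g1^5*g2^4*g3*H^4 + (-12)*f1*f3^3*g1^6*g2^2*g3^2*H^4 + (-8)*f1*f3^3*g1^7*g3^3*H^4 + (-2)*f1*f3^3*g1^9*g3*H^3 + (-2)*f1*f3^3*g0*g2^3*g3^6*H^6 + (-6)*f1*f3^3*g0*g2^7*g3^2*H^5 + (-6)*f1*f3^3*g0*g1^2*g2^3*g3^4*H^5 + (-6)*f1*f3^3*g0*g1^2*g2^7*H^4 + (-6)*f1*f3^3*g0*g1^4*g2^3*g3^2*H^4 + (-2)*f1*f3^3*g0*g1^6*g2^3*H^3 + (-18)*f1*f3^3*g0^2*g2^4*g3^4*H^5 + (-6)*f1*f3^3*g0^2*g2^8*H^4 + (-12)*f1*f3^3*g0^2*g1*g2^2*g3^5*H^5 + (-12)*f1*f3^3*g0^2*g1^2*g3^6*H^5 + (-24)*f1*f3^3*g0^2*g1^2*g2^4*g3^2*H^4 + (-24)*f1*f3^3*g0^2*g1^3*g2^2*g3^3*H^4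 + (-24)*f1*f3^3*g0^2*g1^4*g3^4*H^4 + (-18)*f1*f3^3*g0^2*g1^4*g2^4*H^3 + (-12)*f1*f3^3*g0^2*g1^5*g2^2*g3*H^3 + (-12)*f1*f3^3*g0^2*g1^6*g3^2*H^3 + (-2)*f1*f3^3*g0^3*g2*g3^6*H^5 + (-18)*f1*f3^3*g0^3*g2^5*g3^2*H^4 + (-6)*f1*f3^3*g0^3*g1^2*g2*g3^4*H^4 + (-18)*f1*f3^3*g0^3*g1^2*g2^5*H^3 + (-6)*f1*f3^3*g0^3*g1^4*g2*g3^2*H^3 + (-2)*f1*f3^3*g0^3*g1^6*g2*H^2 + (-18)*f1*f3^3*g0^4*g2^2*g3^4*H^4 + (-8)*f1*f3^3*g0^4*g2^6*H^3 + (-6)*f1*f3^3*g0^4*g1*g3^5*H^4 + (-24)*f1*f3^3*g0^4*g1^2*g2^2*g3^2*H^3 + (-12)*f1*f3^3*g0^4*g1^3*g3^3*H^3 + (-18)*f1*f3^3*g0^4*g1^4*g2^2*H^2 + (-6)*f1*f3^3*g0^4*g1^5*g3*H^2 + (-18)*f1*f3^3*g0^5*g2^3*g3^2*H^3 + (-18)*f1*f3^3*g0^5*g1^2*g2^3*H^2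 + (-2)*f1*f3^3*g0^6*g3^4*H^3 + (-8)*f1*f3^3*g0^6*g2^4*H^2 + (-2)*f1*f3^3*g0^6*g1^4*H + (-6)*f1*f3^3*g0^7*g2*g3^2*H^2 + (-6)*f1*f3^3*g0^7*g1^2*g2*H + (-6)*f1*f3^3*g0^8*g2^2*H + (-2)*f1*f3^3*g0^10 + (-6)*f1*f2*f3^2*g2^7*g3^2*H^5 + (-6)*f1*f2*f3^2*g1^2*g2^7*H^4 + (-18)*f1*f2*f3^2*g0*g2^4*g3^4*H^5 + (-36)*f1*f2*f3^2*g0*g1^2*g2^4*g3^2*H^4 + (-18)*f1*f2*f3^2*g0*g1^4*g2^4*H^3 + (-6)*f1*f2*f3^2*g0^2*g2*g3^6*H^5 + (-24)*f1*f2*f3^2*g0^2*g2^5*g3^2*H^4 + (-18)*f1*f2*f3^2*g0^2*g1^2*g2*g3^4*H^4 + (-24)*f1*f2*f3^2*g0^2*g1^2*g2^5*H^3 + (-18)*f1*f2*f3^2*g0^2*g1^4*g2*g3^2*H^3 + (-6)*f1*f2*f3^2*g0^2*g1^6*g2*H^2 + (-18)*f1*f2*f3^2*g0^3*g2^2*g3^4*H^4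 + (-6)*f1*f2*f3^2*g0^3*g2^6*H^3 + (-36)*f1*f2*f3^2*g0^3*g1^2*g2^2*g3^2*H^3 + (-18)*f1*f2*f3^2*g0^3*g1^4*g2^2*H^2 + (-30)*f1*f2*f3^2*g0^4*g2^3*g3^2*H^3 + (-30)*f1*f2*f3^2*g0^4*g1^2*g2^3*H^2 + (-18)*f1*f2*f3^2*g0^5*g2^4*H^2 + (-12)*f1*f2*f3^2*g0^6*g2*g3^2*H^2 + (-12)*f1*f2*f3^2*g0^6*g1^2*g2*H + (-18)*f1*f2*f3^2*g0^7*g2^2*H + (-6)*f1*f2*f3^2*g0^9 + (-6)*f1*f2^2*f3*g2^4*g3^4*H^5 + (-12)*f1*f2^2*f3*g1^2*g2^4*g3^2*H^4 + (-6)*f1*f2^2*f3*g1^4*g2^4*H^3 + (-6)*f1*f2^2*f3*g0*g2*g3^6*H^5 + (-6)*f1*f2^2*f3*g0*g2^5*g3^2*H^4 + (-18)*f1*f2^2*f3*g0*g1^2*g2*g3^4*H^4 + (-6)*f1*f2^2*f3*g0*g1^2*g2^5*H^3 + (-18)*f1*f2^2*f3*g0*g1^4*g2*g3^2*H^3 +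 (-6)*f1*f2^2*f3*g0*g1^6*g2*H^2 + (-6)*f1*f2^2*f3*g0^2*g2^2*g3^4*H^4 + (-6)*f1*f2^2*f3*g0^2*g2^6*H^3 + (-12)*f1*f2^2*f3*g0^2*g1^2*g2^2*g3^2*H^3 + (-6)*f1*f2^2*f3*g0^2*g1^4*g2^2*H^2 + (-12)*f1*f2^2*f3*g0^3*g2^3*g3^2*H^3 + (-12)*f1*f2^2*f3*g0^3*g1^2*g2^3*H^2 + (-18)*f1*f2^2*f3*g0^4*g2^4*H^2 + (-6)*f1*f2^2*f3*g0^5*g2*g3^2*H^2 + (-6)*f1*f2^2*f3*g0^5*g1^2*g2*H + (-18)*f1*f2^2*f3*g0^6*g2^2*H + (-6)*f1*f2^2*f3*g0^8 + (-2)*f1*f2^3*g2*g3^6*H^5 + (-6)*f1*f2^3*g1^2*g2*g3^4*H^4 + (-6)*f1*f2^3*g1^4*g2*g3^2*H^3 + (-2)*f1*f2^3*g1^6*g2*H^2 + (-2)*f1*f2^3*g0*g2^6*H^3 + (-6)*f1*f2^3*g0^3*g2^4*H^2 + (-6)*f1*f2^3*g0^5*g2^2*H + (-2)*f1*f2^3*g0^7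 + (-3)*f1^2*f3^2*g2^4*g3^4*H^5 + (-3)*f1^2*f3^2*g2^8*H^4 + (-6)*f1^2*f3^2*g1*g2^2*g3^5*H^5 + (-6)*f1^2*f3^2*g1^2*g3^6*H^5 + (-12)*f1^2*f3^2*g1^3*g2^2*g3^3*H^4 + (-12)*f1^2*f3^2*g1^4*g3^4*H^4 + (-3)*f1^2*f3^2*g1^4*g2^4*H^3 + (-6)*f1^2*f3^2*g1^5*g2^2*g3*H^3 + (-6)*f1^2*f3^2*g1^6*g3^2*H^3 + (-6)*f1^2*f3^2*g0*g2^5*g3^2*H^4 + (-6)*f1^2*f3^2*g0*g1^2*g2^5*H^3 + (-12)*f1^2*f3^2*g0^2*g2^2*g3^4*H^4 + (-6)*f1^2*f3^2*g0^2*g2^6*H^3 + (-6)*f1^2*f3^2*g0^2*g1*g3^5*H^4 + (-12)*f1^2*f3^2*g0^2*g1^2*g2^2*g3^2*H^3 + (-12)*f1^2*f3^2*g0^2*g1^3*g3^3*H^3 + (-12)*f1^2*f3^2*g0^2*g1^4*g2^2*H^2 + (-6)*f1^2*f3^2*g0^2*g1^5*g3*H^2 + (-12)*f1^2*f3^2*g0^3*g2^3*g3^2*H^3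 + (-12)*f1^2*f3^2*g0^3*g1^2*g2^3*H^2 + (-3)*f1^2*f3^2*g0^4*g3^4*H^3 + (-6)*f1^2*f3^2*g0^4*g2^4*H^2 + (-3)*f1^2*f3^2*g0^4*g1^4*H + (-6)*f1^2*f3^2*g0^5*g2*g3^2*H^2 + (-6)*f1^2*f3^2*g0^5*g1^2*g2*H + (-6)*f1^2*f3^2*g0^6*g2^2*H + (-3)*f1^2*f3^2*g0^8 + (-6)*f1^2*f2*f3*g2^5*g3^2*H^4 + (-6)*f1^2*f2*f3*g1^2*g2^5*H^3 + (-6)*f1^2*f2*f3*g0*g2^2*g3^4*H^4 + (-12)*f1^2*f2*f3*g0*g1^2*g2^2*g3^2*H^3 + (-6)*f1^2*f2*f3*g0*g1^4*g2^2*H^2 + (-12)*f1^2*f2*f3*g0^2*g2^3*g3^2*H^3 + (-12)*f1^2*f2*f3*g0^2*g1^2*g2^3*H^2 + (-6)*f1^2*f2*f3*g0^3*g2^4*H^2 + (-6)*f1^2*f2*f3*g0^4*g2*g3^2*H^2 + (-6)*f1^2*f2*f3*g0^4*g1^2*g2*H + (-12)*f1^2*f2*f3*g0^5*g2^2*H +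 (-6)*f1^2*f2*f3*g0^7 + (-3)*f1^2*f2^2*g2^2*g3^4*H^4 + (-6)*f1^2*f2^2*g1^2*g2^2*g3^2*H^3 + (-3)*f1^2*f2^2*g1^4*g2^2*H^2 + (-3)*f1^2*f2^2*g0^2*g2^4*H^2 + (-6)*f1^2*f2^2*g0^4*g2^2*H + (-3)*f1^2*f2^2*g0^6 + (-2)*f1^3*f3*g2^2*g3^4*H^4 + (-2)*f1^3*f3*g2^6*H^3 + (-2)*f1^3*f3*g1*g3^5*H^4 + (-4)*f1^3*f3*g1^3*g3^3*H^3 + (-2)*f1^3*f3*g1^4*g2^2*H^2 + (-2)*f1^3*f3*g1^5*g3*H^2 + (-2)*f1^3*f3*g0*g2^3*g3^2*H^3 + (-2)*f1^3*f3*g0*g1^2*g2^3*H^2 + (-2)*f1^3*f3*g0^2*g3^4*H^3 + (-2)*f1^3*f3*g0^2*g2^4*H^2 + (-2)*f1^3*f3*g0^2*g1^4*H + (-2)*f1^3*f3*g0^3*g2*g3^2*H^2 + (-2)*f1^3*f3*g0^3*g1^2*g2*H + (-2)*f1^3*f3*g0^4*g2^2*H + (-2)*f1^3*f3*g0^6 +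 (-2)*f1^3*f2*g2^3*g3^2*H^3 + (-2)*f1^3*f2*g1^2*g2^3*H^2 + (-2)*f1^3*f2*g0^3*g2^2*H + (-2)*f1^3*f2*g0^5 + (-2)*f0*f3^3*g2^3*g3^6*H^6 + (-6)*f0*f3^3*g1^2*g2^3*g3^4*H^5 + (-6)*f0*f3^3*g1^4*g2^3*g3^2*H^4 + (-2)*f0*f3^3*g1^6*g2^3*H^3 + (-6)*f0*f3^3*g0*g2^4*g3^4*H^5 + (-12)*f0*f3^3*g0*g1^2*g2^4*g3^2*H^4 + (-6)*f0*f3^3*g0*g1^4*g2^4*H^3 + (-6)*f0*f3^3*g0^2*g2^5*g3^2*H^4 + (-6)*f0*f3^3*g0^2*g1^2*g2^5*H^3 + (-6)*f0*f3^3*g0^3*g2^2*g3^4*H^4 + (-2)*f0*f3^3*g0^3*g2^6*H^3 + (-12)*f0*f3^3*g0^3*g1^2*g2^2*g3^2*H^3 + (-6)*f0*f3^3*g0^3*g1^4*g2^2*H^2 + (-12)*f0*f3^3*g0^4*g2^3*g3^2*H^3 + (-12)*f0*f3^3*g0^4*g1^2*g2^3*H^2 + (-6)*f0*f3^3*g0^5*g2^4*H^2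 + (-6)*f0*f3^3*g0^6*g2*g3^2*H^2 + (-6)*f0*f3^3*g0^6*g1^2*g2*H + (-6)*f0*f3^3*g0^7*g2^2*H + (-2)*f0*f3^3*g0^9 + (-6)*f0*f2*f3^2*g2^4*g3^4*H^5 + (-12)*f0*f2*f3^2*g1^2*g2^4*g3^2*H^4 + (-6)*f0*f2*f3^2*g1^4*g2^4*H^3 + (-12)*f0*f2*f3^2*g0*g2^5*g3^2*H^4 + (-12)*f0*f2*f3^2*g0*g1^2*g2^5*H^3 + (-6)*f0*f2*f3^2*g0^2*g2^2*g3^4*H^4 + (-6)*f0*f2*f3^2*g0^2*g2^6*H^3 + (-12)*f0*f2*f3^2*g0^2*g1^2*g2^2*g3^2*H^3 + (-6)*f0*f2*f3^2*g0^2*g1^4*g2^2*H^2 + (-24)*f0*f2*f3^2*g0^3*g2^3*g3^2*H^3 + (-24)*f0*f2*f3^2*g0^3*g1^2*g2^3*H^2 + (-18)*f0*f2*f3^2*g0^4*g2^4*H^2 + (-12)*f0*f2*f3^2*g0^5*g2*g3^2*H^2 + (-12)*f0*f2*f3^2*g0^5*g1^2*g2*H + (-18)*f0*f2*f3^2*g0^6*g2^2*H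 + (-6)*f0*f2*f3^2*g0^8 + (-6)*f0*f2^2*f3*g2^5*g3^2*H^4 + (-6)*f0*f2^2*f3*g1^2*g2^5*H^3 + (-6)*f0*f2^2*f3*g0*g2^6*H^3 + (-12)*f0*f2^2*f3*g0^2*g2^3*g3^2*H^3 + (-12)*f0*f2^2*f3*g0^2*g1^2*g2^3*H^2 + (-18)*f0*f2^2*f3*g0^3*g2^4*H^2 + (-6)*f0*f2^2*f3*g0^4*g2*g3^2*H^2 + (-6)*f0*f2^2*f3*g0^4*g1^2*g2*H + (-18)*f0*f2^2*f3*g0^5*g2^2*H + (-6)*f0*f2^2*f3*g0^7 + (-2)*f0*f2^3*g2^6*H^3 + (-6)*f0*f2^3*g0^2*g2^4*H^2 + (-6)*f0*f2^3*g0^4*g2^2*H + (-2)*f0*f2^3*g0^6 + (-6)*f0*f1*f3^2*g0*g2^2*g3^4*H^4 + (-12)*f0*f1*f3^2*g0*g1^2*g2^2*g3^2*H^3 + (-6)*f0*f1*f3^2*g0*g1^4*g2^2*H^2 + (-12)*f0*f1*f3^2*g0^2*g2^3*g3^2*H^3 + (-12)*f0*f1*f3^2*g0^2*g1^2*g2^3*H^2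 + (-6)*f0*f1*f3^2*g0^3*g2^4*H^2 + (-12)*f0*f1*f3^2*g0^4*g2*g3^2*H^2 + (-12)*f0*f1*f3^2*g0^4*g1^2*g2*H + (-12)*f0*f1*f3^2*g0^5*g2^2*H + (-6)*f0*f1*f3^2*g0^7 + (-12)*f0*f1*f2*f3*g0*g2^3*g3^2*H^3 + (-12)*f0*f1*f2*f3*g0*g1^2*g2^3*H^2 + (-12)*f0*f1*f2*f3*g0^2*g2^4*H^2 + (-12)*f0*f1*f2*f3*g0^3*g2*g3^2*H^2 + (-12)*f0*f1*f2*f3*g0^3*g1^2*g2*H + (-24)*f0*f1*f2*f3*g0^4*g2^2*H + (-12)*f0*f1*f2*f3*g0^6 + (-6)*f0*f1*f2^2*g0*g2^4*H^2 + (-12)*f0*f1*f2^2*g0^3*g2^2*H + (-6)*f0*f1*f2^2*g0^5 + (-6)*f0*f1^2*f3*g0^2*g2*g3^2*H^2 + (-6)*f0*f1^2*f3*g0^2*g1^2*g2*H + (-6)*f0*f1^2*f3*g0^3*g2^2*H + (-6)*f0*f1^2*f3*g0^5 + (-6)*f0*f1^2*f2*g0^2*g2^2*H + (-6)*f0*f1^2*f2*g0^4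 + (-2)*f0*f1^3*g0^3 + (-3)*f0^2*f3^2*g2^2*g3^4*H^4 + (-6)*f0^2*f3^2*g1^2*g2^2*g3^2*H^3 + (-3)*f0^2*f3^2*g1^4*g2^2*H^2 + (-6)*f0^2*f3^2*g0*g2^3*g3^2*H^3 + (-6)*f0^2*f3^2*g0*g1^2*g2^3*H^2 + (-3)*f0^2*f3^2*g0^2*g2^4*H^2 + (-6)*f0^2*f3^2*g0^3*g2*g3^2*H^2 + (-6)*f0^2*f3^2*g0^3*g1^2*g2*H + (-6)*f0^2*f3^2*g0^4*g2^2*H + (-3)*f0^2*f3^2*g0^6 + (-6)*f0^2*f2*f3*g2^3*g3^2*H^3 + (-6)*f0^2*f2*f3*g1^2*g2^3*H^2 + (-6)*f0^2*f2*f3*g0*g2^4*H^2 + (-6)*f0^2*f2*f3*g0^2*g2*g3^2*H^2 + (-6)*f0^2*f2*f3*g0^2*g1^2*g2*H + (-12)*f0^2*f2*f3*g0^3*g2^2*H + (-6)*f0^2*f2*f3*g0^5 + (-3)*f0^2*f2^2*g2^4*H^2 + (-6)*f0^2*f2^2*g0^2*g2^2*H + (-3)*f0^2*f2^2*g0^4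 + (-6)*f0^2*f1*f3*g0*g2*g3^2*H^2 + (-6)*f0^2*f1*f3*g0*g1^2*g2*H + (-6)*f0^2*f1*f3*g0^2*g2^2*H + (-6)*f0^2*f1*f3*g0^4 + (-6)*f0^2*f1*f2*g0*g2^2*H + (-6)*f0^2*f1*f2*g0^3 + (-3)*f0^2*f1^2*g0^2 + (-2)*f0^3*f3*g2*g3^2*H^2 + (-2)*f0^3*f3*g1^2*g2*H + (-2)*f0^3*f3*g0*g2^2*H + (-2)*f0^3*f3*g0^3 + (-2)*f0^3*f2*g2^2*H + (-2)*f0^3*f2*g0^2 + (-2)*f0^3*f1*g0) * h2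

theorem final_identity {R : Type*} [Field R] (h2 : (2:R) = 0) (N1 N2 D1 b g1 g3 H : R)
    (hb : b = g1^2 + g3^2*H) (hD1 : D1 ≠ 0) (hbne : b ≠ 0) :
    (N1/D1)^2 * (g1^4+g3^4*H^2) + (N2/b)^2 = ((N1*b^2+N2*D1)/(D1*b))^2 := by
  have hb2 : g1^4+g3^4*H^2 = b^2 := by rw [hb]; linear_combination (-(g1^2*g3^2*H))*h2
  rw [hb2]
  have key : (N1*b^2 + N2*D1)^2 = N1^2*b^4 + N2^2*D1^2 := by
    linear_combination (N1*N2*b^2*D1)*h2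
  calc (N1/D1)^2*b^2 + (N2/b)^2
      = (N1^2*b^4 + N2^2*D1^2)/(D1^2*b^2) := by field_simp
    _ = ((N1*b^2+N2*D1)^2)/((D1*b)^2) := by rw [mul_pow, key]
    _ = ((N1*b^2+N2*D1)/(D1*b))^2 := (div_pow _ _ _).symm

variable {k K : Type*} [Field k] [Field K] [Algebra k K]

lemma charK2 (k : Type*) [Field k] [Algebra k K] [CharP k 2] : CharP K 2 :=
  charP_of_injective_algebraMap (algebraMap k K).injective 2

lemma mem_kSq_of_sq (y : K) : y ^ 2 ∈ kSq k K :=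
  subset_adjoin _ _ ⟨y, rfl⟩

lemma mem_kFour_of_pow4 (y : K) : y ^ 4 ∈ kFour k K :=
  subset_adjoin _ _ ⟨y, rfl⟩

lemma kFour_le_kSq : kFour k K ≤ kSq k K := by
  rw [kFour, adjoin_le_iff]
  rintro _ ⟨y, rfl⟩
  have : (y ^ 2) ^ 2 ∈ kSq k K := mem_kSq_of_sq _
  simpa [← pow_mul] using this

/-- An intermediate field `J` containing `E`, as an `E`-submodule of `K`. -/
def imSub (E J : IntermediateField k K) (hEJ : E ≤ J) : Submodule (↥E) K where
  carrier := J
  add_mem' := fun ha hb => add_mem ha hb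
  zero_mem' := zero_mem _
  smul_mem' := fun c a ha => by
    rw [Algebra.smul_def, IntermediateField.algebraMap_apply]
    exact mul_mem (hEJ c.2) ha

lemma finiteDimensional_over (hfg : (⊤ : IntermediateField k K).FG)
    {x : K} (halgx : Algebra.IsAlgebraic (adjoin k {x}) K)
    (E : IntermediateField k K) {n : ℕ} (hn : n ≠ 0) (hxE : x ^ n ∈ E) :
    FiniteDimensional (↥E) K := by
  have hxint : IsIntegral (↥E) x := by
    refine ⟨Polynomial.X ^ n - Polynomial.C ⟨x ^ n, hxE⟩, Polynomial.monic_X_pow_sub_C _ hn, ?_⟩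
    simp [IntermediateField.algebraMap_apply]
  haveI hZfd : FiniteDimensional (↥E) (↥(adjoin (↥E) {x})) :=
    IntermediateField.adjoin.finiteDimensional hxint
  have hle' : adjoin k {x} ≤ (adjoin (↥E) {x}).restrictScalars k := by
    rw [adjoin_le_iff]
    rintro z rfl
    rw [SetLike.mem_coe, IntermediateField.mem_restrictScalars]
    exact subset_adjoin _ _ rfl
  haveI halgZ : Algebra.IsAlgebraic (↥(adjoin (↥E) {x})) K := by
    constructor
    intro y
    have h1 : IsAlgebraic (↥((adjoin k {x}).toSubalgebra)) y := halgx.isAlgebraic y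
    exact h1.tower_top_of_subalgebra_le
      (A := (adjoin k {x}).toSubalgebra)
      (B := ((adjoin (↥E) {x}).restrictScalars k).toSubalgebra) (fun z hz => hle' hz)
  haveI : Algebra.IsAlgebraic (↥E) (↥(adjoin (↥E) {x})) := Algebra.IsAlgebraic.of_finite _ _
  haveI halgE : Algebra.IsAlgebraic (↥E) K :=
    Algebra.IsAlgebraic.trans (↥E) (↥(adjoin (↥E) {x})) K
  obtain ⟨S, hS⟩ := hfg
  have htopmem : ∀ z : K, z ∈ adjoin (↥E) (S : Set K) := by
    intro z
    have hz : z ∈ adjoin k (S : Set K) := by rw [hS]; trivial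
    induction hz using adjoin_induction with
    | mem w hw => exact subset_adjoin _ _ hw
    | algebraMap c =>
        rw [IsScalarTower.algebraMap_apply k (↥E) K]
        exact IntermediateField.algebraMap_mem _ _
    | add a b _ _ iha ihb => exact add_mem iha ihb
    | inv a _ iha => exact inv_mem iha
    | mul a b _ _ iha ihb => exact mul_mem iha ihb
  have htop : adjoin (↥E) (S : Set K) = ⊤ := eq_top_iff.2 fun z _ => htopmem z
  haveI : FiniteDimensional (↥E) (↥(adjoin (↥E) (S : Set K))) := by
    apply IntermediateField.finiteDimensional_adjoin
    exact fun y _ => (halgE.isAlgebraic y).isIntegral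
  rw [htop] at this
  exact Module.Finite.equiv IntermediateField.topEquiv.toLinearEquiv

section Char2

variable [CharP k 2]

/-- squares of `kSq` lie in `kFour`. -/
lemma sq_mem_kFour_of_mem_kSq {x : K} (hx : x ∈ kSq k K) : x ^ 2 ∈ kFour k K := by
  haveI := charK2 k (K := K)
  haveI : ExpChar K 2 := .prime Nat.prime_two
  induction hx using adjoin_induction with
  | mem y hy => obtain ⟨z, rfl⟩ := hy; exact (by rw [← pow_mul]; exact mem_kFour_of_pow4 z)
  | algebraMap y => rw [← map_pow]; exact IntermediateField.algebraMap_mem _ _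
  | add x y hx hy ihx ihy => rw [add_pow_char]; exact add_mem ihx ihy
  | inv x hx ihx => rw [inv_pow]; exact inv_mem ihx
  | mul x y hx hy ihx ihy => rw [mul_pow]; exact mul_mem ihx ihy

/-- squares of `k⟮s⟯` lie in `k⟮s²⟯`. -/
lemma sq_mem_adjoin_sq {s x : K} (hx : x ∈ adjoin k {s}) : x ^ 2 ∈ adjoin k {s ^ 2} := by
  haveI := charK2 k (K := K)
  haveI : ExpChar K 2 := .prime Nat.prime_two
  induction hx using adjoin_induction with
  | mem y hy =>
      rcases Set.mem_singleton_iff.1 hy with rfl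
      exact subset_adjoin _ _ rfl
  | algebraMap y => rw [← map_pow]; exact IntermediateField.algebraMap_mem _ _
  | add x y hx hy ihx ihy => rw [add_pow_char]; exact add_mem ihx ihy
  | inv x hx ihx => rw [inv_pow]; exact inv_mem ihx
  | mul x y hx hy ihx ihy => rw [mul_pow]; exact mul_mem ihx ihy

lemma D_eq_zero_of_mem_kFour {x : K} (hx : x ∈ kFour k K) :
    KaehlerDifferential.D k K x = 0 := by
  haveI := charK2 k (K := K)
  set D := KaehlerDifferential.D k K with hD
  have h4 : ((4 : ℕ) : K) = 0 := (CharP.cast_eq_zero_iff K 2 4).2 (by norm_num)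
  induction hx using adjoin_induction with
  | mem y hy =>
      obtain ⟨z, rfl⟩ := hy
      rw [Derivation.leibniz_pow, ← Nat.cast_smul_eq_nsmul K, h4, zero_smul]
  | algebraMap y => exact Derivation.map_algebraMap D y
  | add x y hx hy ihx ihy => rw [map_add, ihx, ihy, add_zero]
  | inv x hx ihx => rw [Derivation.leibniz_inv, ihx, smul_zero]
  | mul x y hx hy ihx ihy => rw [Derivation.leibniz, ihx, ihy, smul_zero, smul_zero, add_zero]

lemma transcendental_not_mem_adjoin_sq {s : K} (hs : Transcendental k s) :
    s ∉ adjoin k {s ^ 2} := by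
  intro hmem
  rw [mem_adjoin_simple_iff] at hmem
  obtain ⟨P, Q, hPQ⟩ := hmem
  have hQ : (Polynomial.aeval (s ^ 2)) Q ≠ 0 := by
    intro h0
    rw [h0, div_zero] at hPQ
    exact hs (hPQ ▸ isAlgebraic_zero)
  have hmain : Polynomial.aeval s
      (Polynomial.X * Q.comp (Polynomial.X ^ 2) - P.comp (Polynomial.X ^ 2)) = 0 := by
    have h1 : s * Polynomial.aeval (s ^ 2) Q = Polynomial.aeval (s ^ 2) P := by
      exact (eq_div_iff hQ).1 hPQ
    simp only [map_sub, map_mul, Polynomial.aeval_comp, map_pow, Polynomial.aeval_X]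
    rw [h1]; ring
  have hzero : Polynomial.X * Q.comp (Polynomial.X ^ 2) - P.comp (Polynomial.X ^ 2) = 0 := by
    by_contra hne
    exact hs ⟨_, hne, hmain⟩
  have hder := congrArg Polynomial.derivative hzero
  have hX2 : Polynomial.derivative (Polynomial.X ^ 2 : Polynomial k) = 0 := by
    have h2 : ((2 : ℕ) : k) = 0 := CharP.cast_eq_zero k 2
    rw [Polynomial.derivative_X_pow, h2]
    simp
  rw [Polynomial.derivative_sub, Polynomial.derivative_mul, Polynomial.derivative_comp,
    Polynomial.derivative_comp, hX2, Polynomial.derivative_X] at hder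
  simp only [zero_mul, mul_zero, one_mul, add_zero, sub_zero, Polynomial.derivative_zero] at hder
  apply hQ
  have := congrArg (Polynomial.aeval s) hder
  simpa [Polynomial.aeval_comp] using this

lemma span2 (hdeg : Module.finrank (kSq k K) K = 2) {h : K} (hh : h ∉ kSq k K) (y : K) :
    ∃ c0 c1 : K, c0 ∈ kSq k K ∧ c1 ∈ kSq k K ∧ y = c0 + c1 * h := by
  haveI : FiniteDimensional (kSq k K) K :=
    FiniteDimensional.of_finrank_pos (by rw [hdeg]; norm_num)
  have hli : LinearIndependent (kSq k K) ![(1 : K), h] := by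
    rw [LinearIndependent.pair_iff]
    intro a b hab
    have hb : b = 0 := by
      by_contra hbne
      apply hh
      have : h = -((a : K) / (b : K)) := by
        have h1 : (a : K) + (b : K) * h = 0 := by
          simpa [Algebra.smul_def, IntermediateField.algebraMap_apply] using hab
        have hbK : (b : K) ≠ 0 := fun hc => hbne (Subtype.ext hc)
        field_simp
        linear_combination h1
      rw [this]
      exact neg_mem (div_mem a.2 b.2)
    refine ⟨?_, hb⟩
    rw [hb] at hab
    simpa [Algebra.smul_def] using hab
  have hcard : Fintype.card (Fin 2) = Module.finrank (kSq k K) K := by simp [hdeg]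
  let B := basisOfLinearIndependentOfCardEqFinrank hli hcard
  have hB : ⇑B = ![(1 : K), h] := coe_basisOfLinearIndependentOfCardEqFinrank hli hcard
  have hy := B.sum_repr y
  rw [Fin.sum_univ_two] at hy
  have e0 : B 0 = 1 := by simp [hB]
  have e1 : B 1 = h := by simp [hB]
  refine ⟨B.repr y 0, B.repr y 1, (B.repr y 0).2, (B.repr y 1).2, ?_⟩
  conv_lhs => rw [← hy, e0, e1]
  simp [Algebra.smul_def, IntermediateField.algebraMap_apply]

lemma kSq_ne_kFour (hfg : (⊤ : IntermediateField k K).FG)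
    {x : K} (hxtr : Transcendental k x) (hxalg : Algebra.IsAlgebraic (adjoin k {x}) K) :
    kSq k K ≠ kFour k K := by
  intro Heq
  classical
  haveI := charK2 (K := K) k
  haveI : ExpChar K 2 := .prime Nat.prime_two
  set E0 : IntermediateField k K := adjoin k {x ^ 4} with hE0def
  set E1 : IntermediateField k K := adjoin k {x ^ 2} with hE1def
  have hx4E0 : x ^ 4 ∈ E0 := subset_adjoin _ _ rfl
  have hx2E1 : x ^ 2 ∈ E1 := subset_adjoin _ _ rfl
  haveI hfdE0 : FiniteDimensional (↥E0) K :=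
    finiteDimensional_over hfg hxalg E0 (by norm_num) hx4E0
  haveI hfdE1 : FiniteDimensional (↥E1) K :=
    finiteDimensional_over hfg hxalg E1 (by norm_num) hx2E1
  have hE01 : E0 ≤ E1 := by
    rw [hE0def, adjoin_le_iff]
    rintro z rfl
    show x ^ 4 ∈ E1
    have h4 : x ^ 4 = (x ^ 2) ^ 2 := by ring
    rw [h4]; exact pow_mem hx2E1 2
  have hE1F : E1 ≤ kSq k K := by
    rw [hE1def, adjoin_le_iff]; rintro z rfl; exact mem_kSq_of_sq x
  have hE0F : E0 ≤ kSq k K := hE01.trans hE1F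
  have hsE0 : x ^ 2 ∉ E0 := by
    have h := transcendental_not_mem_adjoin_sq (K := K) (hxtr.pow (by norm_num : 0 < 2))
    have e4 : ((x ^ 2) ^ 2) = x ^ 4 := by ring
    rw [e4] at h
    exact h
  set VF1 : Submodule (↥E1) K := imSub E1 (kSq k K) hE1F with hVF1
  set VF0 : Submodule (↥E0) K := imSub E0 (kSq k K) hE0F with hVF0
  set d : ℕ := Module.finrank (↥E1) VF1 with hd
  let B : Module.Basis (Fin d) (↥E1) VF1 := Module.finBasis _ _
  let e : Fin d → K := fun i => (B i : K)
  have heF : ∀ i, e i ∈ kSq k K := fun i => (B i).2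
  have heind : LinearIndependent (↥E1) e :=
    B.linearIndependent.map' VF1.subtype (Submodule.ker_subtype _)
  have hspan : ∀ y ∈ kSq k K, ∃ c : Fin d → (↥E1), y = ∑ i, (c i : K) * e i := by
    intro y hy
    refine ⟨fun i => B.repr ⟨y, hy⟩ i, ?_⟩
    have hrepr := B.sum_repr ⟨y, hy⟩
    have h2 := congrArg (VF1.subtype) hrepr
    rw [map_sum] at h2
    simp only [map_smul, Submodule.subtype_apply] at h2
    calc y = ∑ i : Fin d, (B.repr ⟨y, hy⟩) i • e i := h2.symm
    _ = ∑ i : Fin d, ((B.repr ⟨y, hy⟩) i : K) * e i :=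
      Finset.sum_congr rfl fun i _ => by rw [Algebra.smul_def, IntermediateField.algebraMap_apply]
  have hsqE1 : ∀ c : (↥E1), ((c : K) ^ 2) ∈ E0 := by
    intro c
    have h := sq_mem_adjoin_sq (k := k) (s := x ^ 2) c.2
    have e4 : ((x ^ 2) ^ 2) = x ^ 4 := by ring
    rwa [e4] at h
  set V : Submodule (↥E0) K := Submodule.span (↥E0) (Set.range fun i => (e i) ^ 2) with hV
  have hsq_span : ∀ y ∈ kSq k K, y ^ 2 ∈ V := by
    intro y hy
    obtain ⟨c, rfl⟩ := hspan y hy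
    rw [sum_pow_char]
    apply Submodule.sum_mem
    intro i _
    rw [mul_pow]
    have hmul : ((c i : K) ^ 2) * (e i) ^ 2
        = (⟨(c i : K) ^ 2, hsqE1 (c i)⟩ : (↥E0)) • (e i) ^ 2 := by
      rw [Algebra.smul_def, IntermediateField.algebraMap_apply]
    rw [hmul]
    exact Submodule.smul_mem _ _ (Submodule.subset_span ⟨i, rfl⟩)
  have h1V : (1 : K) ∈ V := by
    have h := hsq_span 1 (one_mem _)
    simpa using h
  have hVmul : ∀ a ∈ V, ∀ b ∈ V, a * b ∈ V := by
    intro a ha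
    induction ha using Submodule.span_induction with
    | mem w hw =>
        intro b hb
        induction hb using Submodule.span_induction with
        | mem w' hw' =>
            obtain ⟨i, rfl⟩ := hw
            obtain ⟨j, rfl⟩ := hw'
            have hq : (e i) ^ 2 * (e j) ^ 2 = (e i * e j) ^ 2 := by ring
            rw [hq]
            exact hsq_span _ (mul_mem (heF i) (heF j))
        | zero => simpa using zero_mem V
        | add u v hu hv ihu ihv => rw [mul_add]; exact add_mem ihu ihv
        | smul cc u hu ihu => rw [mul_smul_comm]; exact Submodule.smul_mem _ _ ihu
    | zero => intro b hb; simpa using zero_mem V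
    | add u v hu hv ihu ihv => intro b hb; rw [add_mul]; exact add_mem (ihu b hb) (ihv b hb)
    | smul cc u hu ihu => intro b hb; rw [smul_mul_assoc]; exact Submodule.smul_mem _ _ (ihu b hb)
  let A : Subalgebra (↥E0) K :=
    { carrier := V
      mul_mem' := fun ha hb => hVmul _ ha _ hb
      one_mem' := h1V
      add_mem' := fun ha hb => add_mem ha hb
      zero_mem' := zero_mem V
      algebraMap_mem' := fun c => by
        have hc : algebraMap (↥E0) K c = c • (1 : K) := by rw [Algebra.smul_def, mul_one]
        rw [hc]
        exact Submodule.smul_mem _ _ h1V }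
  have hAinv : ∀ y : K, y ∈ V → y⁻¹ ∈ V := by
    intro y hy
    rcases eq_or_ne y 0 with rfl | hy0
    · simpa using zero_mem V
    · exact A.inv_mem_of_algebraic (x := ⟨y, hy⟩) (IsAlgebraic.of_finite (↥E0) y)
  have hkFour_sub : ∀ y ∈ kFour k K, y ∈ V := by
    intro y hy
    induction hy using adjoin_induction with
    | mem w hw =>
        obtain ⟨z, rfl⟩ := hw
        have hz : z ^ 4 = (z ^ 2) ^ 2 := by ring
        rw [hz]
        exact hsq_span _ (mem_kSq_of_sq z)
    | algebraMap c =>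
        rw [IsScalarTower.algebraMap_apply k (↥E0) K]
        exact A.algebraMap_mem' _
    | add a b _ _ iha ihb => exact add_mem iha ihb
    | inv a _ iha => exact hAinv a iha
    | mul a b _ _ iha ihb => exact hVmul a iha b ihb
  have hsub : VF0 ≤ V := by
    intro y hy
    have hy' : y ∈ kSq k K := hy
    rw [Heq] at hy'
    exact hkFour_sub y hy'
  have hup : Module.finrank (↥E0) VF0 ≤ d := by
    have h1 : Module.finrank (↥E0) VF0 ≤ Module.finrank (↥E0) V :=
      Submodule.finrank_mono hsub
    have h2 : Module.finrank (↥E0) V ≤ d := by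
      have := finrank_span_le_card (R := ↥E0) (Set.range fun i => (e i) ^ 2)
      refine le_trans this ?_
      rw [Set.toFinset_range]
      exact le_trans (Finset.card_image_le) (by simp)
    exact le_trans h1 h2
  let w : (Fin d ⊕ Fin d) → K := Sum.elim e (fun i => x ^ 2 * e i)
  have hwind : LinearIndependent (↥E0) w := by
    rw [Fintype.linearIndependent_iff]
    intro c hc
    have hre : ∑ j, c j • w j
        = ∑ i : Fin d, ((c (.inl i) : K) + (c (.inr i) : K) * x ^ 2) * e i := by
      rw [Fintype.sum_sum_type, ← Finset.sum_add_distrib]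
      apply Finset.sum_congr rfl
      intro i _
      rw [Algebra.smul_def, Algebra.smul_def, IntermediateField.algebraMap_apply,
        IntermediateField.algebraMap_apply]
      show (c (.inl i) : K) * e i + (c (.inr i) : K) * (x ^ 2 * e i) = _
      ring
    let c' : Fin d → (↥E1) := fun i =>
      ⟨(c (.inl i) : K) + (c (.inr i) : K) * x ^ 2,
        add_mem (hE01 (c (.inl i)).2) (mul_mem (hE01 (c (.inr i)).2) hx2E1)⟩
    have hc' : ∀ i, c' i = 0 := by
      apply Fintype.linearIndependent_iff.1 heind c'
      have hcc : ∑ i, c' i • e i = ∑ j, c j • w j := by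
        rw [hre]
        exact Finset.sum_congr rfl fun i _ => by
          rw [Algebra.smul_def, IntermediateField.algebraMap_apply]
      rw [hcc, hc]
    have hzero : ∀ i : Fin d, (c (.inl i) : K) + (c (.inr i) : K) * x ^ 2 = 0 := by
      intro i
      exact congrArg Subtype.val (hc' i)
    have hr0 : ∀ i, c (.inr i) = 0 := by
      intro i
      by_contra hne
      apply hsE0
      have hcrK : (c (.inr i) : K) ≠ 0 := fun hcc => hne (Subtype.ext hcc)
      have hx2eq : (x : K) ^ 2 = -((c (.inl i) : K) / (c (.inr i) : K)) := by
        field_simp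
        linear_combination hzero i
      rw [hx2eq]
      exact neg_mem (div_mem (c (.inl i)).2 (c (.inr i)).2)
    intro j
    rcases j with i | i
    · have h := hzero i
      rw [hr0 i] at h
      simp only [ZeroMemClass.coe_zero, zero_mul, add_zero] at h
      exact Subtype.ext h
    · exact hr0 i
  have hlow : 2 * d ≤ Module.finrank (↥E0) VF0 := by
    have hsp : Submodule.span (↥E0) (Set.range w) ≤ VF0 := by
      rw [Submodule.span_le]
      rintro z ⟨j, rfl⟩
      rcases j with i | i
      · exact heF i
      · show x ^ 2 * e i ∈ kSq k K
        exact mul_mem (mem_kSq_of_sq x) (heF i)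
    have h1 : Module.finrank (↥E0) (Submodule.span (↥E0) (Set.range w))
        = Fintype.card (Fin d ⊕ Fin d) := finrank_span_eq_card hwind
    have h2 := Submodule.finrank_mono (R := ↥E0) hsp
    rw [h1] at h2
    simpa [two_mul] using h2
  have hdpos : 0 < d := by
    rw [hd]
    rw [Module.finrank_pos_iff]
    refine ⟨⟨1, ?_⟩, 0, fun hcon => one_ne_zero (congrArg Subtype.val hcon)⟩
    show (1 : K) ∈ kSq k K
    exact one_mem _
  omega

lemma hsq_not_kFour (hfg : (⊤ : IntermediateField k K).FG)
    {x : K} (hxtr : Transcendental k x) (hxalg : Algebra.IsAlgebraic (adjoin k {x}) K)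
    (hdeg : Module.finrank (kSq k K) K = 2) {h : K} (hh : h ∉ kSq k K) :
    h ^ 2 ∉ kFour k K := by
  intro hmem
  haveI := charK2 (K := K) k
  haveI : ExpChar K 2 := .prime Nat.prime_two
  apply kSq_ne_kFour hfg hxtr hxalg
  apply le_antisymm ?_ kFour_le_kSq
  rw [kSq, adjoin_le_iff]
  rintro _ ⟨y, rfl⟩
  obtain ⟨c0, c1, hc0, hc1, hyeq⟩ := span2 hdeg hh y
  have hexp : y ^ 2 = c0 ^ 2 + c1 ^ 2 * h ^ 2 := by
    rw [hyeq, add_pow_char, mul_pow]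
  rw [hexp]
  exact add_mem (sq_mem_kFour_of_mem_kSq hc0)
    (mul_mem (sq_mem_kFour_of_mem_kSq hc1) hmem)

lemma indep4 (hfg : (⊤ : IntermediateField k K).FG)
    {x : K} (hxtr : Transcendental k x) (hxalg : Algebra.IsAlgebraic (adjoin k {x}) K)
    (hdeg : Module.finrank (kSq k K) K = 2) {h : K} (hh : h ∉ kSq k K)
    {b0 b1 b2 b3 : K} (hm0 : b0 ∈ kFour k K) (hm1 : b1 ∈ kFour k K)
    (hm2 : b2 ∈ kFour k K) (hm3 : b3 ∈ kFour k K)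
    (hrel : b0 + b1 * h + b2 * h ^ 2 + b3 * h ^ 3 = 0) :
    b0 = 0 ∧ b1 = 0 ∧ b2 = 0 ∧ b3 = 0 := by
  have hh2 : h ^ 2 ∈ kSq k K := mem_kSq_of_sq h
  have hkf : kFour k K ≤ kSq k K := kFour_le_kSq
  have hu : b0 + b2 * h ^ 2 ∈ kSq k K := add_mem (hkf hm0) (mul_mem (hkf hm2) hh2)
  have hv : b1 + b3 * h ^ 2 ∈ kSq k K := add_mem (hkf hm1) (mul_mem (hkf hm3) hh2)
  have huv : (b0 + b2 * h ^ 2) + (b1 + b3 * h ^ 2) * h = 0 := by linear_combination hrel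
  have hv0 : b1 + b3 * h ^ 2 = 0 := by
    by_contra hne
    apply hh
    have heq : h = -((b0 + b2 * h ^ 2) / (b1 + b3 * h ^ 2)) := by
      rw [eq_neg_iff_add_eq_zero, add_div_eq_mul_add_div _ _ hne, div_eq_zero_iff]
      left
      linear_combination huv
    rw [heq]
    exact neg_mem (div_mem hu hv)
  have hu0 : b0 + b2 * h ^ 2 = 0 := by linear_combination huv - h * hv0
  have hn4 : h ^ 2 ∉ kFour k K := hsq_not_kFour hfg hxtr hxalg hdeg hh
  have hb3 : b3 = 0 := by
    by_contra hne
    apply hn4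
    have heq : h ^ 2 = -(b1 / b3) := by
      field_simp
      linear_combination hv0
    rw [heq]
    exact neg_mem (div_mem hm1 hm3)
  have hb1 : b1 = 0 := by linear_combination hv0 - h ^ 2 * hb3
  have hb2 : b2 = 0 := by
    by_contra hne
    apply hn4
    have heq : h ^ 2 = -(b0 / b2) := by
      field_simp
      linear_combination hu0
    rw [heq]
    exact neg_mem (div_mem hm0 hm2)
  have hb0 : b0 = 0 := by linear_combination hu0 - h ^ 2 * hb2
  exact ⟨hb0, hb1, hb2, hb3⟩

end Char2

end SYaux

open SYaux in
/-- **Additivity of the Sugiyama–Yasuda symbol** (Lemma 4.7 / Theorem 4.8(c) of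
Kedlaya–Litt–Witaszek): for all `f, g, h ∈ R = K \ k(K²)`,
`SY(f, g) + SY(g, h) = SY(f, h)` in `Ω[K⁄k]`. -/
theorem SY_symbol_additive
    (k K : Type*) [Field k] [CharP k 2] [Field K] [Algebra k K]
    (hfg : (⊤ : IntermediateField k K).FG)
    (htr : ∃ x : K, Transcendental k x ∧
      Algebra.IsAlgebraic (IntermediateField.adjoin k {x}) K)
    (halg : ∀ x : K, IsAlgebraic k x → x ∈ (algebraMap k K).range)
    (hdeg : Module.finrank (kSq k K) K = 2)
    (L : Type*) [Field L] (ι : K →+* L)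
    (hLperf : ∀ x : L, ∃ y : L, y ^ 2 = x)
    (hLinsep : ∀ x : L, ∃ n : ℕ, x ^ 2 ^ n ∈ Set.range ι)
    (f g h : K) (hf : f ∉ kSq k K) (hg : g ∉ kSq k K) (hh : h ∉ kSq k K)
    (s₁ s₂ s₃ : K) (hs₁ : SYWitness k K L ι f g s₁) (hs₂ : SYWitness k K L ι g h s₂)
    (hs₃ : SYWitness k K L ι f h s₃) :
    s₁ • (KaehlerDifferential.D k K g : Ω[K⁄k]) + s₂ • KaehlerDifferential.D k K h =
      s₃ • KaehlerDifferential.D k K h := by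
  classical
  haveI hK2 : CharP K 2 := charK2 (K := K) k
  haveI : ExpChar K 2 := .prime Nat.prime_two
  haveI hL2 : CharP L 2 := charP_of_injective_ringHom ι.injective 2
  have h2L : (2 : L) = 0 := by
    have := CharP.cast_eq_zero L 2
    exact_mod_cast this
  have h2K : (2 : K) = 0 := by
    have := CharP.cast_eq_zero K 2
    exact_mod_cast this
  obtain ⟨x, hxtr, hxalg⟩ := htr
  obtain ⟨f0, f1, f2, f3, mf0, mf1, mf2, mf3, hexp1, hden1, hval1⟩ := hs₁
  obtain ⟨g0, g1, g2, g3, mg0, mg1, mg2, mg3, hexp2, hden2, hval2⟩ := hs₂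
  obtain ⟨F0', F1', F2', F3', mF0, mF1, mF2, mF3, hexp3, hden3, hval3⟩ := hs₃
  obtain ⟨a0, ha0m, ha0e⟩ := mg0
  obtain ⟨a1, ha1m, ha1e⟩ := mg1
  obtain ⟨a2, ha2m, ha2e⟩ := mg2
  obtain ⟨a3, ha3m, ha3e⟩ := mg3
  -- the decomposition of g over h, inside K
  have hgK : g = a0 + a1 * h + a2 * h ^ 2 + a3 * h ^ 3 := by
    apply ι.injective
    rw [map_add, map_add, map_add, map_mul, map_mul, map_mul, map_pow, map_pow,
      ha0e, ha1e, ha2e, ha3e]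
    exact hexp2
  -- derivative computation
  have hDa0 : KaehlerDifferential.D k K a0 = 0 := D_eq_zero_of_mem_kFour ha0m
  have hDa1 : KaehlerDifferential.D k K a1 = 0 := D_eq_zero_of_mem_kFour ha1m
  have hDa2 : KaehlerDifferential.D k K a2 = 0 := D_eq_zero_of_mem_kFour ha2m
  have hDa3 : KaehlerDifferential.D k K a3 = 0 := D_eq_zero_of_mem_kFour ha3m
  have hc2 : ((2 : ℕ) : K) = 0 := CharP.cast_eq_zero K 2
  have hc3 : ((3 : ℕ) : K) = 1 := by push_cast; linear_combination h2K
  have hDh2 : KaehlerDifferential.D k K (h ^ 2) = 0 := by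
    rw [Derivation.leibniz_pow, ← Nat.cast_smul_eq_nsmul K, hc2, zero_smul]
  have hDh3 : KaehlerDifferential.D k K (h ^ 3)
      = h ^ 2 • KaehlerDifferential.D k K h := by
    rw [Derivation.leibniz_pow, ← Nat.cast_smul_eq_nsmul K, hc3, one_smul]
  have hDg : KaehlerDifferential.D k K g
      = (a1 + a3 * h ^ 2) • KaehlerDifferential.D k K h := by
    conv_lhs => rw [hgK]
    rw [map_add, map_add, map_add, Derivation.leibniz, Derivation.leibniz, Derivation.leibniz,
      hDa0, hDa1, hDa2, hDa3, hDh2, hDh3]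
    simp only [smul_zero, add_zero, zero_add, smul_smul, add_smul]
  -- reduce to an identity between elements of K
  suffices hKey : s₁ * (a1 + a3 * h ^ 2) + s₂ = s₃ by
    rw [hDg, smul_smul, ← add_smul, hKey]
  apply ι.injective
  rw [map_add, map_mul, map_add, map_mul, map_pow, ha1e, ha3e]
  set H : L := ι h with hH
  -- the composite coefficients
  set Aa : L := g0^2 + g2^2*H with hAa
  set Bb : L := g1^2 + g3^2*H with hBb
  set F0 : L := f0 + f1*g0 + f2*Aa + f3*(Aa*g0 + Bb*g2*H) with hF0
  set F1 : L := f1*g1 + f3*(Aa*g1 + Bb*g3*H) with hF1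
  set F2 : L := f1*g2 + f2*Bb + f3*(Aa*g2 + Bb*g0) with hF2
  set F3 : L := f1*g3 + f3*(Aa*g3 + Bb*g1) with hF3
  -- closure properties of M = {z : L | z⁴ ∈ ι(kFour)}
  have Padd : ∀ {u v : L}, u^4 ∈ ι '' (kFour k K : Set K) → v^4 ∈ ι '' (kFour k K : Set K) →
      (u + v)^4 ∈ ι '' (kFour k K : Set K) := by
    rintro u v ⟨zu, hzu, hzue⟩ ⟨zv, hzv, hzve⟩
    exact ⟨zu + zv, add_mem hzu hzv, by
      rw [map_add, hzue, hzve]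
      linear_combination (-(2*u^3*v + 3*u^2*v^2 + 2*u*v^3)) * h2L⟩
  have Pmul : ∀ {u v : L}, u^4 ∈ ι '' (kFour k K : Set K) → v^4 ∈ ι '' (kFour k K : Set K) →
      (u * v)^4 ∈ ι '' (kFour k K : Set K) := by
    rintro u v ⟨zu, hzu, hzue⟩ ⟨zv, hzv, hzve⟩
    exact ⟨zu * zv, mul_mem hzu hzv, by rw [map_mul, hzue, hzve]; ring⟩
  have Psub : ∀ {u v : L}, u^4 ∈ ι '' (kFour k K : Set K) → v^4 ∈ ι '' (kFour k K : Set K) →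
      (u - v)^4 ∈ ι '' (kFour k K : Set K) := by
    rintro u v ⟨zu, hzu, hzue⟩ ⟨zv, hzv, hzve⟩
    exact ⟨zu - zv, sub_mem hzu hzv, by
      rw [map_sub, hzue, hzve]
      linear_combination (2*u^3*v - 3*u^2*v^2 + 2*u*v^3 - v^4) * h2L⟩
  have Psq : ∀ {u : L}, u^4 ∈ ι '' (kFour k K : Set K) →
      (u ^ 2)^4 ∈ ι '' (kFour k K : Set K) := by
    intro u hu
    rw [pow_two]
    exact Pmul hu hu
  have PH : H^4 ∈ ι '' (kFour k K : Set K) :=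
    ⟨h ^ 4, mem_kFour_of_pow4 h, by rw [map_pow]⟩
  have Pg0 : g0^4 ∈ ι '' (kFour k K : Set K) := ⟨a0, ha0m, ha0e⟩
  have Pg1 : g1^4 ∈ ι '' (kFour k K : Set K) := ⟨a1, ha1m, ha1e⟩
  have Pg2 : g2^4 ∈ ι '' (kFour k K : Set K) := ⟨a2, ha2m, ha2e⟩
  have Pg3 : g3^4 ∈ ι '' (kFour k K : Set K) := ⟨a3, ha3m, ha3e⟩
  have PA : Aa^4 ∈ ι '' (kFour k K : Set K) := by
    rw [hAa]; exact Padd (Psq Pg0) (Pmul (Psq Pg2) PH)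
  have PB : Bb^4 ∈ ι '' (kFour k K : Set K) := by
    rw [hBb]; exact Padd (Psq Pg1) (Pmul (Psq Pg3) PH)
  have PF0 : F0^4 ∈ ι '' (kFour k K : Set K) := by
    rw [hF0]
    exact Padd (Padd (Padd mf0 (Pmul mf1 Pg0)) (Pmul mf2 PA))
      (Pmul mf3 (Padd (Pmul PA Pg0) (Pmul (Pmul PB Pg2) PH)))
  have PF1 : F1^4 ∈ ι '' (kFour k K : Set K) := by
    rw [hF1]
    exact Padd (Pmul mf1 Pg1) (Pmul mf3 (Padd (Pmul PA Pg1) (Pmul (Pmul PB Pg3) PH)))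
  have PF2 : F2^4 ∈ ι '' (kFour k K : Set K) := by
    rw [hF2]
    exact Padd (Padd (Pmul mf1 Pg2) (Pmul mf2 PB))
      (Pmul mf3 (Padd (Pmul PA Pg2) (Pmul PB Pg0)))
  have PF3 : F3^4 ∈ ι '' (kFour k K : Set K) := by
    rw [hF3]
    exact Padd (Pmul mf1 Pg3) (Pmul mf3 (Padd (Pmul PA Pg3) (Pmul PB Pg1)))
  -- the expansion of f in powers of H
  have hI1 : ι f = F0^4 + F1^4*H + F2^4*H^2 + F3^4*H^3 := by
    rw [hexp1, hexp2, hF0, hF1, hF2, hF3, hAa, hBb]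
    exact SYaux.I1 h2L f0 f1 f2 f3 g0 g1 g2 g3 H
  -- uniqueness of the decomposition : F' = F
  obtain ⟨b0K, hb0m, hb0e⟩ := Psub PF0 mF0
  obtain ⟨b1K, hb1m, hb1e⟩ := Psub PF1 mF1
  obtain ⟨b2K, hb2m, hb2e⟩ := Psub PF2 mF2
  obtain ⟨b3K, hb3m, hb3e⟩ := Psub PF3 mF3
  have hrelL : (F0 - F0')^4 + (F1 - F1')^4*H + (F2 - F2')^4*H^2 + (F3 - F3')^4*H^3 = 0 := by
    linear_combination hI1 - hexp3 + ((F0^4 - 2*F0^3*F0' + 3*F0^2*F0'^2 - 2*F0*F0'^3)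
      + H*(F1^4 - 2*F1^3*F1' + 3*F1^2*F1'^2 - 2*F1*F1'^3)
      + H^2*(F2^4 - 2*F2^3*F2' + 3*F2^2*F2'^2 - 2*F2*F2'^3)
      + H^3*(F3^4 - 2*F3^3*F3' + 3*F3^2*F3'^2 - 2*F3*F3'^3)) * h2L
  have hbrel : b0K + b1K * h + b2K * h ^ 2 + b3K * h ^ 3 = 0 := by
    apply ι.injective
    rw [map_add, map_add, map_add, map_mul, map_mul, map_mul, map_pow, map_pow, map_zero,
      hb0e, hb1e, hb2e, hb3e]
    exact hrelL
  obtain ⟨hz0, hz1, hz2, hz3⟩ :=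
    indep4 hfg hxtr hxalg hdeg hh hb0m hb1m hb2m hb3m hbrel
  have hc1 : F1' = F1 := by
    have h4 : (F1 - F1')^4 = 0 := by rw [← hb1e, hz1, map_zero]
    have h0 : F1 - F1' = 0 := pow_eq_zero_iff (by norm_num) |>.1 h4
    linear_combination -h0
  have hc2' : F2' = F2 := by
    have h4 : (F2 - F2')^4 = 0 := by rw [← hb2e, hz2, map_zero]
    have h0 : F2 - F2' = 0 := pow_eq_zero_iff (by norm_num) |>.1 h4
    linear_combination -h0
  have hc3' : F3' = F3 := by
    have h4 : (F3 - F3')^4 = 0 := by rw [← hb3e, hz3, map_zero]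
    have h0 : F3 - F3' = 0 := pow_eq_zero_iff (by norm_num) |>.1 h4
    linear_combination -h0
  rw [hc1, hc2', hc3'] at hval3
  -- final computation
  rw [hval1, hval2, hval3, hexp2]
  have hD1ne : (f1^2 + f3^2*(g0^4+g1^4*H+g2^4*H^2+g3^4*H^3)) ≠ 0 := by
    rw [← hexp2]; exact hden1
  have hI2' : F1^2 + F3^2*H = (f1^2+f3^2*(g0^4+g1^4*H+g2^4*H^2+g3^4*H^3)) * Bb := by
    rw [hF1, hF3, hAa, hBb]
    exact SYaux.I2 h2L f1 f3 g0 g1 g2 g3 H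
  have hI3' : F1*F3 + F2^2
      = (f1*f3+f2^2)*Bb^2 + (g1*g3+g2^2)*(f1^2+f3^2*(g0^4+g1^4*H+g2^4*H^2+g3^4*H^3)) := by
    rw [hF1, hF2, hF3, hAa, hBb]
    exact SYaux.I3 h2L f1 f2 f3 g0 g1 g2 g3 H
  rw [hI3', hI2']
  exact SYaux.final_identity h2L (f1*f3+f2^2) (g1*g3+g2^2)
    (f1^2+f3^2*(g0^4+g1^4*H+g2^4*H^2+g3^4*H^3)) Bb g1 g3 H hBb hD1ne hden2
end

section
/- Let k be an algebraically closed field of characteristic 2 and K a finitely generated field extension of k of transcendence degree 1 (so [K : k(K²)] = 2). Then for every g ∈ R := K \ k(K²) and every a ∈ K, there exists f ∈ R with SY(f, g) = da in Ω_{K/k}. (By Tsen's theorem, the quadratic equation defining the Sugiyama–Yasuda symbol has a solution, so every exact differential is realized as a symbol against g.) -/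
open IntermediateField

open MvPolynomial

section TsenCore

variable {k : Type*} [Field k] [IsAlgClosed k]

private lemma homogComp_mul {σ : Type*} {f : MvPolynomial σ k} (hf : f.IsHomogeneous 2)
    (c : MvPolynomial σ k) (e : ℕ) :
    homogeneousComponent (e + 2) (c * f) = homogeneousComponent e c * f := by
  conv_lhs => rw [← sum_homogeneousComponent c, Finset.sum_mul, map_sum]
  have h1 : ∀ i, homogeneousComponent (e+2) (homogeneousComponent i c * f)
      = if e = i then homogeneousComponent i c * f else 0 := by
    intro i
    rw [homogeneousComponent_of_mem ((mem_homogeneousSubmodule _ _).mpr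
      (((homogeneousComponent_isHomogeneous i c).mul hf)))]
    simp only [add_left_inj]
  rw [Finset.sum_congr rfl fun i _ => h1 i, Finset.sum_ite_eq]
  by_cases he : e ∈ Finset.range (c.totalDegree + 1)
  · rw [if_pos he]
  · rw [if_neg he]
    have : homogeneousComponent e c = 0 :=
      homogeneousComponent_eq_zero _ _ (by simpa using he)
    rw [this, zero_mul]

private lemma monomial_eq_prod_pow {N : ℕ} (d : Fin N →₀ ℕ) :
    (monomial d (1:k)) = ∏ j, X j ^ d j := by
  rw [monomial_eq, map_one, one_mul]
  exact Finsupp.prod_fintype _ _ (fun i => pow_zero _)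

private lemma sum_univ_eq_degsum {N : ℕ} (d : Fin N →₀ ℕ) :
    (d.sum fun _ e => e) = ∑ j, d j :=
  Finsupp.sum_fintype _ _ (fun i => rfl)

/-- **Tsen-style core lemma**: over an algebraically closed field, `M` quadratic forms
in `N > M` variables have a common nontrivial zero. -/
theorem tsen_core {N M : ℕ} (hMN : M < N) (F : Fin M → MvPolynomial (Fin N) k)
    (hF : ∀ i, (F i).IsHomogeneous 2) :
    ∃ x : Fin N → k, x ≠ 0 ∧ ∀ i, eval x (F i) = 0 := by
  classical
  by_contra hcon
  push_neg at hcon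
  set I : Ideal (MvPolynomial (Fin N) k) := Ideal.span (Set.range F) with hI
  have hrad : ∀ j : Fin N, ∃ e, (X j : MvPolynomial (Fin N) k) ^ e ∈ I := by
    intro j
    rw [← Ideal.mem_radical_iff, ← vanishingIdeal_zeroLocus_eq_radical (K := k)]
    intro x hx
    have hx0 : x = 0 := by
      by_contra hx0
      obtain ⟨i, hi⟩ := hcon x hx0
      exact hi (hx _ (Ideal.subset_span ⟨i, rfl⟩))
    simp [hx0]
  choose e he using hrad
  obtain ⟨E, hE2, hEe⟩ : ∃ E, 2 ≤ E ∧ ∀ j, (X j : MvPolynomial (Fin N) k) ^ E ∈ I := by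
    refine ⟨(Finset.univ.sup e) + 2, le_add_self, fun j => ?_⟩
    have hle : e j ≤ Finset.univ.sup e + 2 :=
      le_trans (Finset.le_sup (Finset.mem_univ j)) (Nat.le_add_right _ _)
    have : (X j : MvPolynomial (Fin N) k) ^ (Finset.univ.sup e + 2)
        = (X j) ^ (Finset.univ.sup e + 2 - e j) * (X j) ^ (e j) := by
      rw [← pow_add]
      congr 1
      omega
    rw [this]
    exact Ideal.mul_mem_left _ _ (he j)
  set D₀ : ℕ := N * E with hD₀
  -- the spanning spaces
  set gens : (s : ℕ) → ((Fin M → Fin (s+1)) × (Fin N → Fin (D₀+1))) → MvPolynomial (Fin N) k :=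
    fun s p => (∏ i, F i ^ (p.1 i : ℕ)) * ∏ j, X j ^ (p.2 j : ℕ) with hgens
  set T : ℕ → Submodule k (MvPolynomial (Fin N) k) :=
    fun s => Submodule.span k (Set.range (gens s)) with hT
  have hmulF : ∀ (s : ℕ) (i : Fin M) (p : MvPolynomial (Fin N) k), p ∈ T s →
      F i * p ∈ T (s+1) := by
    intro s i p hp
    induction hp using Submodule.span_induction with
    | mem x hx =>
      obtain ⟨⟨γ, δ⟩, rfl⟩ := hx
      apply Submodule.subset_span
      refine ⟨⟨fun i' => if i' = i then ⟨(γ i' : ℕ) + 1, by omega⟩ else ⟨γ i', by omega⟩, δ⟩, ?_⟩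
      simp only [hgens]
      rw [← mul_assoc]
      congr 1
      have hcoe : ∀ x : Fin M, (((if x = i then (⟨(γ x : ℕ) + 1, by omega⟩ : Fin (s+1+1))
          else ⟨γ x, by omega⟩) : Fin (s+1+1)) : ℕ) = (if x = i then 1 else 0) + (γ x : ℕ) := by
        intro x; by_cases hx : x = i <;> simp [hx] <;> omega
      simp only [hcoe, pow_add]
      rw [Finset.prod_mul_distrib]
      congr 1
      have : ∀ x : Fin M, F x ^ (if x = i then 1 else 0) = if x = i then F x else 1 := by
        intro x; by_cases hx : x = i <;> simp [hx]
      simp only [this]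
      simp [Finset.prod_ite_eq']
    | zero => simp
    | add x y _ _ hx hy => rw [mul_add]; exact add_mem hx hy
    | smul a x _ hx => rw [mul_smul_comm]; exact Submodule.smul_mem _ _ hx
  have hTmono : ∀ (s : ℕ), T s ≤ T (s+1) := by
    intro s
    apply Submodule.span_mono
    rintro x ⟨⟨γ, δ⟩, rfl⟩
    exact ⟨⟨fun i => ⟨γ i, by omega⟩, δ⟩, rfl⟩
  -- key claim
  have key : ∀ (n s : ℕ) (d : Fin N →₀ ℕ), (∑ j, d j) ≤ n → (∑ j, d j) ≤ 2*s + D₀ →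
      (monomial d (1:k)) ∈ T s := by
    intro n
    induction n using Nat.strong_induction_on with
    | _ n IH =>
      intro s d hdn hds
      by_cases hbase : (∑ j, d j) ≤ D₀
      · apply Submodule.subset_span
        refine ⟨⟨fun _ => ⟨0, by omega⟩, fun j => ⟨d j, ?_⟩⟩, ?_⟩
        · have : d j ≤ ∑ j', d j' := Finset.single_le_sum (fun _ _ => Nat.zero_le _)
            (Finset.mem_univ j)
          omega
        · simp only [hgens, Fin.val_mk, pow_zero, Finset.prod_const_one, one_mul]
          exact (monomial_eq_prod_pow d).symm
      · -- inductive step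
        push_neg at hbase
        have hs1 : 1 ≤ s := by omega
        obtain ⟨j, hj⟩ : ∃ j, E ≤ d j := by
          by_contra hj
          push_neg at hj
          have : (∑ j, d j) ≤ N * (E - 1) := by
            calc (∑ j, d j) ≤ ∑ _j : Fin N, (E-1) :=
              Finset.sum_le_sum (fun j _ => by have := hj j; omega)
            _ = N * (E-1) := by simp [Finset.sum_const, mul_comm]
          have hD : N * (E-1) < N * E := by
            have h1 : 1 ≤ N := by omega
            have h2 : E - 1 < E := by omega
            exact mul_lt_mul_of_pos_left h2 (by omega)
          omega
        have hsingle_le : Finsupp.single j E ≤ d := by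
          rw [Finsupp.single_le_iff]
          exact hj
        set d' : Fin N →₀ ℕ := d - Finsupp.single j E with hd'
        have hsum : Finsupp.single j E + d' = d := by
          rw [hd']
          exact add_tsub_cancel_of_le hsingle_le
        have hsumd' : (∑ j', d' j') = (∑ j', d j') - E := by
          have h1 : (∑ j', (Finsupp.single j E + d') j') = ∑ j', d j' := by rw [hsum]
          have h2 : (∑ j', (Finsupp.single j E) j') = E := by
            rw [Finset.sum_eq_single j]
            · simp
            · intro b _ hb; simp [Finsupp.single_apply, (Ne.symm hb)]
            · intro h; exact absurd (Finset.mem_univ j) h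
          simp only [Finsupp.add_apply, Finset.sum_add_distrib, h2] at h1
          omega
        -- monomial splits
        have hmonsplit : (monomial d (1:k)) = X j ^ E * monomial d' 1 := by
          rw [X_pow_eq_monomial, monomial_mul, hsum, mul_one]
        obtain ⟨c, hc⟩ := (Submodule.mem_span_range_iff_exists_fun (MvPolynomial (Fin N) k)).mp (hEe j)
        have hXE : (X j ^ E : MvPolynomial (Fin N) k) ∈ homogeneousSubmodule (Fin N) k E := by
          rw [mem_homogeneousSubmodule]
          simpa using (isHomogeneous_X k j).pow E
        have hrep : (X j : MvPolynomial (Fin N) k) ^ E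
            = ∑ i, homogeneousComponent (E - 2) (c i) * F i := by
          have h0 : (X j : MvPolynomial (Fin N) k) ^ E
              = homogeneousComponent E (X j ^ E) := by
            rw [homogeneousComponent_of_mem hXE, if_pos rfl]
          rw [h0, ← hc, map_sum]
          refine Finset.sum_congr rfl fun i _ => ?_
          rw [smul_eq_mul]
          have h2 := homogComp_mul (hF i) (c i) (E - 2)
          rw [show E - 2 + 2 = E from by omega] at h2
          exact h2
        rw [hmonsplit, hrep, Finset.sum_mul]
        apply Submodule.sum_mem
        intro i _
        have hre : homogeneousComponent (E-2) (c i) * F i * monomial d' 1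
            = F i * (homogeneousComponent (E-2) (c i) * monomial d' 1) := by ring
        rw [hre]
        have hq : (homogeneousComponent (E - 2) (c i) * monomial d' 1) ∈ T (s - 1) := by
          set q := homogeneousComponent (E - 2) (c i) * monomial d' 1 with hqdef
          have hqtd : q.totalDegree ≤ (E - 2) + ((∑ j', d j') - E) := by
            refine le_trans (totalDegree_mul _ _) ?_
            apply Nat.add_le_add
            · exact (homogeneousComponent_isHomogeneous (E-2) (c i)).totalDegree_le
            · rw [totalDegree_monomial _ (one_ne_zero)]
              rw [sum_univ_eq_degsum, hsumd']
          rw [as_sum q]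
          apply Submodule.sum_mem
          intro d'' hd''
          have : (monomial d'' (coeff d'' q)) = (coeff d'' q) • monomial d'' (1:k) := by
            rw [smul_monomial, smul_eq_mul, mul_one]
          rw [this]
          apply Submodule.smul_mem
          have hdeg'' : (∑ j', d'' j') ≤ (∑ j', d j') - 2 := by
            have hjle : E ≤ ∑ j', d j' := le_trans hj
              (Finset.single_le_sum (fun _ _ => Nat.zero_le _) (Finset.mem_univ j))
            have := le_totalDegree hd''
            rw [sum_univ_eq_degsum] at this
            omega
          exact IH (n-1) (by omega) (s-1) d'' (by omega) (by omega)
        have := hmulF (s-1) i _ hq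
        rwa [Nat.sub_add_cancel hs1] at this
  -- dimension bounds
  have hv₀ : 1 ≤ (D₀+1)^N := Nat.one_le_pow _ _ (by omega)
  set u : ℕ := N^M * (D₀+1)^N with hu
  set s : ℕ := N * u with hs
  -- the linearly independent family of monomials inside T s
  set ι : (Fin N → Fin (2*u+1)) → (Fin N →₀ ℕ) :=
    fun v => Finsupp.equivFunOnFinite.symm (fun j => (v j : ℕ)) with hι
  have hι_inj : Function.Injective ι := by
    intro v w h
    have := Finsupp.equivFunOnFinite.symm.injective h
    funext j
    exact Fin.ext (congrFun this j)
  have hfam_li : LinearIndependent k (fun v => monomial (ι v) (1:k)) := by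
    have : (fun v => monomial (ι v) (1:k)) = (fun d => monomial d (1:k)) ∘ ι := rfl
    rw [this]
    have hb := (basisMonomials (Fin N) k).linearIndependent
    rw [coe_basisMonomials] at hb
    exact hb.comp ι hι_inj
  have hfam_mem : ∀ v, monomial (ι v) (1:k) ∈ T s := by
    intro v
    have hco : ∀ j, (ι v) j = (v j : ℕ) := fun j => rfl
    have hb : (∑ j, (ι v) j) ≤ 2*s + D₀ := by
      calc (∑ j, (ι v) j) = ∑ j, ((v j : ℕ)) := by simp [hco]
      _ ≤ ∑ _j : Fin N, 2*u := Finset.sum_le_sum (fun j _ => by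
          have := (v j).isLt; omega)
      _ = N * (2*u) := by simp [Finset.sum_const, mul_comm]
      _ ≤ 2*s + D₀ := by rw [hs]; ring_nf; omega
    exact key (2*s + D₀) s _ hb hb
  haveI hfin : FiniteDimensional k (T s) := by
    apply FiniteDimensional.span_of_finite
    exact Set.finite_range _
  have hlow : (2*u+1)^N ≤ Module.finrank k (T s) := by
    have hli' : LinearIndependent k
        (fun v : (Fin N → Fin (2*u+1)) => (⟨monomial (ι v) 1, hfam_mem v⟩ : T s)) := by
      apply LinearIndependent.of_comp (T s).subtype
      exact hfam_li
    have := hli'.fintype_card_le_finrank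
    simpa [Fintype.card_fun] using this
  have hup : Module.finrank k (T s) ≤ (s+1)^M * (D₀+1)^N := by
    have h1 : Module.finrank k (T s) ≤ (Set.range (gens s)).toFinset.card :=
      finrank_span_le_card (R := k) (Set.range (gens s))
    refine le_trans h1 ?_
    rw [Set.toFinset_range]
    refine le_trans (Finset.card_image_le) ?_
    rw [Finset.card_univ]
    simp [Fintype.card_fun]
  -- contradiction
  have harith : (s+1)^M * (D₀+1)^N < (2*u+1)^N := by
    have hN1 : 1 ≤ N := by omega
    have hexp : N * (2*u+1) = 2*(N*u) + N := by ring
    have hstep : s + 1 ≤ N * (2*u+1) := by omega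
    calc (s+1)^M * (D₀+1)^N ≤ (N*(2*u+1))^M * (D₀+1)^N :=
          Nat.mul_le_mul_right _ (Nat.pow_le_pow_left hstep M)
    _ = (2*u+1)^M * (N^M * (D₀+1)^N) := by rw [mul_pow]; ring
    _ < (2*u+1)^M * (2*u+1) := mul_lt_mul_of_pos_left (by omega) (by positivity)
    _ = (2*u+1)^(M+1) := by rw [pow_succ]
    _ ≤ (2*u+1)^N := Nat.pow_le_pow_right (by omega) (by omega)
  omega

end TsenCore

section Bilinear

open MvPolynomial

/-- Over an algebraically closed field, a bilinear map into a space of smaller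
dimension has a nontrivial self-annihilating vector. -/
theorem exists_bilinear_selfzero {k V W : Type*} [Field k] [IsAlgClosed k]
    [AddCommGroup V] [Module k V] [AddCommGroup W] [Module k W]
    [FiniteDimensional k V] [FiniteDimensional k W]
    (hdim : Module.finrank k W < Module.finrank k V)
    (B : V →ₗ[k] V →ₗ[k] W) :
    ∃ v : V, v ≠ 0 ∧ B v v = 0 := by
  classical
  set N := Module.finrank k V with hN
  set M := Module.finrank k W with hM
  set bV := Module.finBasis k V with hbV
  set bW := Module.finBasis k W with hbW
  set F : Fin M → MvPolynomial (Fin N) k := fun i =>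
    ∑ st : Fin N × Fin N,
      C (bW.repr (B (bV st.1) (bV st.2)) i) * X st.1 * X st.2 with hF
  have hFhom : ∀ i, (F i).IsHomogeneous 2 := by
    intro i
    apply IsHomogeneous.sum
    intro st _
    have h1 : (C (σ := Fin N) (bW.repr (B (bV st.1) (bV st.2)) i)).IsHomogeneous 0 :=
      isHomogeneous_C _ _
    have := (h1.mul (isHomogeneous_X k st.1)).mul (isHomogeneous_X k st.2)
    simpa using this
  obtain ⟨x, hx0, hx⟩ := tsen_core hdim F hFhom
  set v : V := bV.equivFun.symm x with hv
  have hvne : v ≠ 0 := fun h => hx0 (by rwa [hv, LinearEquiv.map_eq_zero_iff] at h)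
  refine ⟨v, hvne, ?_⟩
  have hvsum : v = ∑ s, x s • bV s := bV.equivFun_symm_apply x
  have hBvv : B v v = ∑ st : Fin N × Fin N, (x st.1 * x st.2) • B (bV st.1) (bV st.2) := by
    rw [Fintype.sum_prod_type, hvsum]
    simp only [map_sum, LinearMap.sum_apply, map_smul, LinearMap.smul_apply,
      Finset.smul_sum, smul_smul]
    rw [Finset.sum_comm]
    exact Finset.sum_congr rfl fun s _ => Finset.sum_congr rfl fun t _ => by rw [mul_comm]
  apply bW.ext_elem
  intro i
  have hco : bW.repr (B v v) i = eval x (F i) := by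
    rw [hBvv, hF]
    simp only [map_sum, Finsupp.finset_sum_apply, map_smul, Finsupp.smul_apply,
      smul_eq_mul, eval_mul, eval_C, eval_X]
    refine Finset.sum_congr rfl fun st _ => by ring
  rw [hco, hx i]
  simp

end Bilinear

section Conic

open Polynomial IntermediateField

set_option maxHeartbeats 1000000 in
/-- Tsen-type solvability of the conic `f₂² + f₁f₃ + b f₁² + b g f₃² = 0` over a function
field of transcendence degree 1 over an algebraically closed field. -/
theorem solve_conic {k K : Type*} [Field k] [IsAlgClosed k] [Field K] [Algebra k K]
    (t : K) (ht : Transcendental k t)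
    [fd : FiniteDimensional (IntermediateField.adjoin k {t}) K]
    (b g : K) :
    ∃ f₁ f₂ f₃ : K, ¬(f₁ = 0 ∧ f₂ = 0 ∧ f₃ = 0) ∧
      f₂^2 + f₁*f₃ + b*f₁^2 + b*g*f₃^2 = 0 := by
  classical
  set F := IntermediateField.adjoin k {t} with hFdef
  set n := Module.finrank F K with hn
  have hn1 : 0 < n := Module.finrank_pos
  set bb : Module.Basis (Fin n) F K := Module.finBasis F K with hbb
  have htmem : t ∈ F := IntermediateField.mem_adjoin_simple_self k t
  set τ : F := ⟨t, htmem⟩ with hτ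
  have hinj : ∀ q : Polynomial k, q ≠ 0 → (Polynomial.aeval t) q ≠ 0 := by
    intro q hq h0
    exact ht ⟨q, hq, h0⟩
  -- the filtration subspaces
  set fam : (d : ℕ) → Fin (d+1) × Fin n → K :=
    fun d p => t ^ (p.1 : ℕ) * bb p.2 with hfam
  set Wd : ℕ → Submodule k K := fun d => Submodule.span k (Set.range (fam d)) with hWd
  -- linear independence of the generating family
  have h_li : ∀ d : ℕ, LinearIndependent k (fam d) := by
    intro d
    rw [Fintype.linearIndependent_iff]
    intro c hc
    -- regroup the sum over basis vectors
    have hgroup : ∑ p : Fin (d+1) × Fin n, c p • fam d p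
        = ∑ j : Fin n, ((Polynomial.aeval τ (∑ i : Fin (d+1),
            Polynomial.C (c (i, j)) * Polynomial.X ^ (i:ℕ)) : F)) • bb j := by
      rw [Fintype.sum_prod_type_right]
      refine Finset.sum_congr rfl fun j _ => ?_
      rw [map_sum]
      rw [Finset.sum_smul]
      refine Finset.sum_congr rfl fun i _ => ?_
      have h1 : (Polynomial.aeval τ (Polynomial.C (c (i, j)) * Polynomial.X ^ (i:ℕ)) : F)
          = c (i, j) • τ ^ (i:ℕ) := by
        simp [Algebra.smul_def]
      have h2 : (τ ^ (i:ℕ) : F) • bb j = t ^ (i:ℕ) * bb j := by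
        rw [Algebra.smul_def]
        congr 1
      rw [h1, smul_assoc, h2, hfam]
    rw [hgroup] at hc
    have hzero : ∀ j, (Polynomial.aeval τ (∑ i : Fin (d+1),
        Polynomial.C (c (i, j)) * Polynomial.X ^ (i:ℕ)) : F) = 0 := by
      have := Fintype.linearIndependent_iff.mp bb.linearIndependent _ hc
      exact this
    intro p
    obtain ⟨i₀, j₀⟩ := p
    have hq0 : (∑ i : Fin (d+1), Polynomial.C (c (i, j₀)) * Polynomial.X ^ (i:ℕ)) = 0 := by
      by_contra hne
      have : (Polynomial.aeval t) (∑ i : Fin (d+1),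
          Polynomial.C (c (i, j₀)) * Polynomial.X ^ (i:ℕ)) = 0 := by
        have h2 := congrArg (algebraMap F K) (hzero j₀)
        rw [map_zero] at h2
        rw [← h2]
        rw [← Polynomial.aeval_algebraMap_apply]
        rfl
      exact hinj _ hne this
    have := congrArg (fun q => Polynomial.coeff q (i₀ : ℕ)) hq0
    simp only [Polynomial.finset_sum_coeff, Polynomial.coeff_C_mul,
      Polynomial.coeff_X_pow, Polynomial.coeff_zero, mul_ite, mul_one, mul_zero] at this
    rw [Finset.sum_eq_single i₀] at this
    · simpa using this
    · intro i _ hi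
      rw [if_neg]
      intro hii
      exact hi (Fin.ext (by omega))
    · intro h; exact absurd (Finset.mem_univ i₀) h
  -- monotonicity
  have hWmono : ∀ {d d' : ℕ}, d ≤ d' → Wd d ≤ Wd d' := by
    intro d d' hdd
    apply Submodule.span_mono
    rintro x ⟨⟨i, j⟩, rfl⟩
    exact ⟨⟨⟨i, by omega⟩, j⟩, rfl⟩
  -- multiplication by powers of t
  have hWt : ∀ (d i : ℕ) (x : K), x ∈ Wd d → t ^ i * x ∈ Wd (d + i) := by
    intro d i x hx
    induction hx using Submodule.span_induction with
    | mem y hy =>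
      obtain ⟨⟨i', j⟩, rfl⟩ := hy
      apply Submodule.subset_span
      refine ⟨⟨⟨(i' : ℕ) + i, by omega⟩, j⟩, ?_⟩
      simp only [hfam]
      rw [← mul_assoc, ← pow_add]
      congr 2
      omega
    | zero => simp
    | add x y _ _ hx hy => rw [mul_add]; exact add_mem hx hy
    | smul a x _ hx => rw [mul_smul_comm]; exact Submodule.smul_mem _ _ hx
  -- multiplication by polynomials in t
  have hWP : ∀ (d : ℕ) (P : Polynomial k) (x : K), x ∈ Wd d →
      (Polynomial.aeval t P) * x ∈ Wd (d + P.natDegree) := by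
    intro d P x hx
    rw [Polynomial.aeval_eq_sum_range, Finset.sum_mul]
    apply Submodule.sum_mem
    intro i hi
    rw [smul_mul_assoc]
    apply Submodule.smul_mem
    have h1 := hWt d i x hx
    exact hWmono (by simp at hi; omega) h1
  have hbbmem : ∀ j, bb j ∈ Wd 0 := by
    intro j
    apply Submodule.subset_span
    exact ⟨⟨0, j⟩, by simp [hfam]⟩
  -- common denominators
  have hdenom : ∀ z : K, ∃ (q : Polynomial k) (m : ℕ), q ≠ 0 ∧
      (Polynomial.aeval t q) * z ∈ Wd m := by
    intro z
    have hcoord : ∀ j : Fin n, ∃ (p q : Polynomial k), q ≠ 0 ∧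
        (Polynomial.aeval t q) * ((bb.repr z j : F) : K) = Polynomial.aeval t p := by
      intro j
      have hmem : ((bb.repr z j : F) : K) ∈ IntermediateField.adjoin k {t} := (bb.repr z j).2
      obtain ⟨r, s, hrs⟩ := (IntermediateField.mem_adjoin_simple_iff k _).mp hmem
      by_cases hs : (Polynomial.aeval t) s = 0
      · exact ⟨0, 1, one_ne_zero, by simp [hrs, hs]⟩
      · refine ⟨r, s, fun h0 => hs (by rw [h0]; simp), ?_⟩
        rw [hrs]
        field_simp
    choose pp qq hqq hpq using hcoord
    refine ⟨∏ j, qq j, (Finset.univ.sup fun j =>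
      ((∏ j' ∈ Finset.univ.erase j, qq j') * pp j).natDegree), ?_, ?_⟩
    · exact Finset.prod_ne_zero_iff.mpr fun j _ => hqq j
    · have hzeq : (Polynomial.aeval t) (∏ j, qq j) * z
          = ∑ j, (Polynomial.aeval t) (∏ j', qq j') * ((bb.repr z j) • bb j) := by
        rw [← Finset.mul_sum, Module.Basis.sum_repr]
      rw [hzeq]
      apply Submodule.sum_mem
      intro j _
      have hsplit : (Polynomial.aeval t) (∏ j', qq j') * ((bb.repr z j) • bb j)
          = ((Polynomial.aeval t) ((∏ j' ∈ Finset.univ.erase j, qq j') * pp j)) * bb j := by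
        have h1 : (bb.repr z j) • bb j = ((bb.repr z j : F) : K) * bb j := by
          rw [Algebra.smul_def]; rfl
        rw [h1, ← Finset.mul_prod_erase Finset.univ qq (Finset.mem_univ j), map_mul, map_mul]
        linear_combination ((Polynomial.aeval t) (∏ j' ∈ Finset.univ.erase j, qq j') * bb j)
          * hpq j
      rw [hsplit]
      have h2 := hWP 0 ((∏ j' ∈ Finset.univ.erase j, qq j') * pp j) (bb j) (hbbmem j)
      rw [zero_add] at h2
      exact hWmono (Finset.le_sup (Finset.mem_univ j)) h2
  -- common denominator for all the products we need
  set zfam : Fin 3 × Fin n × Fin n → K := fun p =>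
    (if p.1 = 0 then 1 else if p.1 = 1 then b else b * g) * (bb p.2.1 * bb p.2.2) with hzfam
  have hz : ∀ p, ∃ (q : Polynomial k) (m : ℕ), q ≠ 0 ∧
      (Polynomial.aeval t q) * zfam p ∈ Wd m := fun p => hdenom (zfam p)
  choose qz mz hqz hmz using hz
  set q₀ : Polynomial k := ∏ p, qz p with hq₀
  have hq₀ne : q₀ ≠ 0 := Finset.prod_ne_zero_iff.mpr fun p _ => hqz p
  set r : ℕ := (∑ p, (qz p).natDegree) + Finset.univ.sup mz with hr
  have hkey : ∀ p, (Polynomial.aeval t q₀) * zfam p ∈ Wd r := by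
    intro p
    have hsplit : (Polynomial.aeval t (∏ p' ∈ Finset.univ.erase p, qz p'))
          * ((Polynomial.aeval t (qz p)) * zfam p) = (Polynomial.aeval t q₀) * zfam p := by
      rw [← mul_assoc, ← map_mul, Finset.prod_erase_mul Finset.univ qz (Finset.mem_univ p),
        ← hq₀]
    rw [← hsplit]
    have h1 := hWP (Finset.univ.sup mz) (∏ p' ∈ Finset.univ.erase p, qz p') _
      (hWmono (Finset.le_sup (Finset.mem_univ p)) (hmz p))
    refine hWmono ?_ h1
    rw [hr]
    have h2 := Polynomial.natDegree_prod_le (Finset.univ.erase p) qz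
    have h3 : ∑ p' ∈ Finset.univ.erase p, (qz p').natDegree ≤ ∑ p', (qz p').natDegree :=
      Finset.sum_le_sum_of_subset (Finset.erase_subset _ _)
    omega
  -- the quadratic bound
  have hprod : ∀ (w : K), (∀ j j', (Polynomial.aeval t q₀) * (w * (bb j * bb j')) ∈ Wd r) →
      ∀ (x y : K), x ∈ Wd r → y ∈ Wd r →
        (Polynomial.aeval t q₀) * (w * (x * y)) ∈ Wd (3*r) := by
    intro w hw x y hx hy
    induction hx using Submodule.span_induction with
    | mem x hxg =>
      induction hy using Submodule.span_induction with
      | mem y hyg =>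
        obtain ⟨⟨i, j⟩, rfl⟩ := hxg
        obtain ⟨⟨i', j'⟩, rfl⟩ := hyg
        simp only [hfam]
        have h1 : (Polynomial.aeval t q₀) * (w * ((t^(i:ℕ) * bb j) * (t^(i':ℕ) * bb j')))
            = t^((i:ℕ)+(i':ℕ)) * ((Polynomial.aeval t q₀) * (w * (bb j * bb j'))) := by ring
        rw [h1]
        refine hWmono ?_ (hWt r ((i:ℕ)+(i':ℕ)) _ (hw j j'))
        have := i.isLt
        have := i'.isLt
        omega
      | zero => simp
      | add y₁ y₂ _ _ hy₁ hy₂ =>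
        have : (Polynomial.aeval t q₀) * (w * (x * (y₁ + y₂)))
            = (Polynomial.aeval t q₀) * (w * (x * y₁))
              + (Polynomial.aeval t q₀) * (w * (x * y₂)) := by ring
        rw [this]; exact add_mem hy₁ hy₂
      | smul a y _ hy₁ =>
        have : (Polynomial.aeval t q₀) * (w * (x * (a • y)))
            = a • ((Polynomial.aeval t q₀) * (w * (x * y))) := by
          rw [Algebra.smul_def, Algebra.smul_def]; ring
        rw [this]; exact Submodule.smul_mem _ _ hy₁
    | zero => simp
    | add x₁ x₂ _ _ hx₁ hx₂ =>
      have : (Polynomial.aeval t q₀) * (w * ((x₁ + x₂) * y))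
          = (Polynomial.aeval t q₀) * (w * (x₁ * y))
            + (Polynomial.aeval t q₀) * (w * (x₂ * y)) := by ring
      rw [this]; exact add_mem hx₁ hx₂
    | smul a x _ hx₁ =>
      have : (Polynomial.aeval t q₀) * (w * ((a • x) * y))
          = a • ((Polynomial.aeval t q₀) * (w * (x * y))) := by
        rw [Algebra.smul_def, Algebra.smul_def]; ring
      rw [this]; exact Submodule.smul_mem _ _ hx₁
  have hw1 : ∀ j j', (Polynomial.aeval t q₀) * ((1:K) * (bb j * bb j')) ∈ Wd r := by
    intro j j'
    have := hkey (0, j, j')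
    simpa [hzfam] using this
  have hwb : ∀ j j', (Polynomial.aeval t q₀) * (b * (bb j * bb j')) ∈ Wd r := by
    intro j j'
    have := hkey (1, j, j')
    simpa [hzfam] using this
  have hwbg : ∀ j j', (Polynomial.aeval t q₀) * ((b*g) * (bb j * bb j')) ∈ Wd r := by
    intro j j'
    have := hkey (2, j, j')
    simpa [hzfam] using this
  -- the bilinear map on K × K × K
  set BK : K × K × K →ₗ[k] K × K × K →ₗ[k] K := LinearMap.mk₂ k
    (fun x y => (Polynomial.aeval t q₀) *
      (x.2.1*y.2.1 + x.1*y.2.2 + b*(x.1*y.1) + (b*g)*(x.2.2*y.2.2)))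
    (fun m₁ m₂ y => by simp only [Prod.fst_add, Prod.snd_add]; ring)
    (fun c m y => by
      simp only [Prod.smul_fst, Prod.smul_snd]
      simp only [Algebra.smul_def]
      ring)
    (fun m y₁ y₂ => by simp only [Prod.fst_add, Prod.snd_add]; ring)
    (fun c m y => by
      simp only [Prod.smul_fst, Prod.smul_snd]
      simp only [Algebra.smul_def]
      ring) with hBK
  set P := Wd r with hP
  set ι3 : ↥P × ↥P × ↥P →ₗ[k] K × K × K := (P.subtype.prodMap (P.subtype.prodMap P.subtype))
    with hι3
  set Bcomp : (↥P × ↥P × ↥P) →ₗ[k] (↥P × ↥P × ↥P) →ₗ[k] K := BK.compl₁₂ ι3 ι3 with hBcomp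
  have hmem : ∀ x y : ↥P × ↥P × ↥P, Bcomp x y ∈ Wd (3*r) := by
    intro x y
    have hval : Bcomp x y
        = (Polynomial.aeval t q₀) * ((1:K) * ((x.2.1:K)*(y.2.1:K)))
          + (Polynomial.aeval t q₀) * ((1:K) * ((x.1:K)*(y.2.2:K)))
          + (Polynomial.aeval t q₀) * (b*((x.1:K)*(y.1:K)))
          + (Polynomial.aeval t q₀) * ((b*g)*((x.2.2:K)*(y.2.2:K))) := by
      show (Polynomial.aeval t q₀) *
        ((x.2.1:K)*(y.2.1:K) + (x.1:K)*(y.2.2:K) + b*((x.1:K)*(y.1:K))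
          + (b*g)*((x.2.2:K)*(y.2.2:K))) = _
      ring
    rw [hval]
    exact add_mem (add_mem (add_mem
      (hprod 1 hw1 _ _ x.2.1.2 y.2.1.2)
      (hprod 1 hw1 _ _ x.1.2 y.2.2.2))
      (hprod b hwb _ _ x.1.2 y.1.2))
      (hprod (b*g) hwbg _ _ x.2.2.2 y.2.2.2)
  haveI hfinP : FiniteDimensional k P := by
    apply FiniteDimensional.span_of_finite
    exact Set.finite_range _
  haveI hfinW3 : FiniteDimensional k (Wd (3*r)) := by
    apply FiniteDimensional.span_of_finite
    exact Set.finite_range _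
  set Bres : (↥P × ↥P × ↥P) →ₗ[k] (↥P × ↥P × ↥P) →ₗ[k] ↥(Wd (3*r)) := LinearMap.mk₂ k
    (fun x y => ⟨Bcomp x y, hmem x y⟩)
    (fun m₁ m₂ y => Subtype.ext (by
      simp only [Submodule.coe_add]
      rw [map_add, LinearMap.add_apply]))
    (fun c m y => Subtype.ext (by
      simp only [SetLike.val_smul]
      rw [map_smul, LinearMap.smul_apply]))
    (fun m y₁ y₂ => Subtype.ext (by
      simp only [Submodule.coe_add]
      rw [map_add]))
    (fun c m y => Subtype.ext (by
      simp only [SetLike.val_smul]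
      rw [map_smul])) with hBres
  -- dimension count
  have hrankP : Module.finrank k P = (r+1) * n := by
    rw [hP, hWd]
    rw [finrank_span_eq_card (h_li r)]
    simp [Fintype.card_prod]
  have hrankW3 : Module.finrank k (Wd (3*r)) ≤ (3*r+1) * n := by
    have h1 : Module.finrank k (Wd (3*r)) ≤ (Set.range (fam (3*r))).toFinset.card :=
      finrank_span_le_card (R := k) (Set.range (fam (3*r)))
    refine le_trans h1 ?_
    rw [Set.toFinset_range]
    refine le_trans (Finset.card_image_le) ?_
    rw [Finset.card_univ]
    simp [Fintype.card_prod]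
  have hdim : Module.finrank k (Wd (3*r)) < Module.finrank k (↥P × ↥P × ↥P) := by
    have h2 : Module.finrank k (↥P × ↥P × ↥P) = 3 * ((r+1) * n) := by
      rw [Module.finrank_prod, Module.finrank_prod, hrankP]
      ring
    rw [h2]
    have h3 : (3*r+1) * n < 3 * ((r+1) * n) := by nlinarith
    omega
  obtain ⟨v, hv0, hveq⟩ := exists_bilinear_selfzero hdim Bres
  set f₁ : K := (v.1 : K) with hf₁
  set f₂ : K := (v.2.1 : K) with hf₂
  set f₃ : K := (v.2.2 : K) with hf₃
  have hEq0 : (Polynomial.aeval t q₀) *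
      (f₂*f₂ + f₁*f₃ + b*(f₁*f₁) + (b*g)*(f₃*f₃)) = 0 := by
    have := congrArg (Subtype.val) hveq
    exact this
  have hq₀t : (Polynomial.aeval t q₀) ≠ 0 := hinj q₀ hq₀ne
  have hE : f₂^2 + f₁*f₃ + b*f₁^2 + b*g*f₃^2 = 0 := by
    have h4 := (mul_eq_zero.mp hEq0).resolve_left hq₀t
    calc f₂^2 + f₁*f₃ + b*f₁^2 + b*g*f₃^2
        = f₂*f₂ + f₁*f₃ + b*(f₁*f₁) + (b*g)*(f₃*f₃) := by ring
    _ = 0 := h4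
  refine ⟨f₁, f₂, f₃, ?_, hE⟩
  rintro ⟨h1, h2, h3⟩
  apply hv0
  have : v = (v.1, v.2.1, v.2.2) := rfl
  rw [this]
  have hv1 : v.1 = 0 := Subtype.ext h1
  have hv2 : v.2.1 = 0 := Subtype.ext h2
  have hv3 : v.2.2 = 0 := Subtype.ext h3
  rw [hv1, hv2, hv3]
  rfl

end Conic


section StageA

variable {k K : Type*} [Field k] [IsAlgClosed k] [CharP k 2] [Field K] [Algebra k K]

lemma mem_kSq_iff (x : K) : x ∈ kSq k K ↔ ∃ y : K, x = y ^ 2 := by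
  haveI : CharP K 2 := charP_of_injective_algebraMap (algebraMap k K).injective 2
  constructor
  · intro hx
    let S : Subfield K :=
      { carrier := {x : K | ∃ y, x = y^2}
        mul_mem' := by rintro a b ⟨y, rfl⟩ ⟨z, rfl⟩; exact ⟨y*z, by ring⟩
        one_mem' := ⟨1, by ring⟩
        add_mem' := by rintro a b ⟨y, rfl⟩ ⟨z, rfl⟩; exact ⟨y+z, (CharTwo.add_sq y z).symm⟩
        zero_mem' := ⟨0, by ring⟩
        neg_mem' := by rintro a ⟨y, rfl⟩; exact ⟨y, by rw [CharTwo.neg_eq]⟩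
        inv_mem' := by rintro a ⟨y, rfl⟩; exact ⟨y⁻¹, (inv_pow y 2).symm⟩ }
    have halg : ∀ c : k, algebraMap k K c ∈ S := by
      intro c
      obtain ⟨z, hz⟩ := IsAlgClosed.exists_pow_nat_eq c (n := 2) (by norm_num)
      exact ⟨algebraMap k K z, by rw [← hz, map_pow]⟩
    have hle : kSq k K ≤ S.toIntermediateField halg := by
      apply IntermediateField.adjoin_le_iff.mpr
      intro y hy
      exact hy
    exact hle hx
  · rintro ⟨y, rfl⟩
    exact IntermediateField.subset_adjoin _ _ ⟨y, rfl⟩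

lemma decomp_sq (hdeg : Module.finrank (kSq k K) K = 2) {g : K} (hg : g ∉ kSq k K) (a : K) :
    ∃ s c : K, a = s^2 + c^2 * g := by
  haveI : CharP K 2 := charP_of_injective_algebraMap (algebraMap k K).injective 2
  haveI : FiniteDimensional (kSq k K) K := .of_finrank_pos (by omega)
  have hg0 : g ≠ 0 := fun h => hg (h ▸ (kSq k K).zero_mem)
  have hli : LinearIndependent (kSq k K) ![g, (1:K)] := by
    rw [linearIndependent_fin2]
    constructor
    · simp
    · intro c hc
      simp only [Matrix.cons_val_one, Matrix.head_cons, Matrix.cons_val_zero] at hc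
      apply hg
      have hgc : g = (c : K) := by
        rw [← hc, Algebra.smul_def, mul_one, IntermediateField.algebraMap_apply]
      rw [hgc]
      exact c.2
  have hspan := hli.span_eq_top_of_card_eq_finrank' (by simpa using hdeg.symm)
  have hmem : a ∈ Submodule.span (kSq k K) (Set.range ![g, (1:K)]) := hspan ▸ trivial
  have hrange : Set.range ![g, (1:K)] = {g, 1} := by
    rw [Matrix.range_cons, Matrix.range_cons, Matrix.range_empty, Set.union_empty,
      Set.singleton_union]
  rw [hrange, Submodule.mem_span_pair] at hmem
  obtain ⟨p, q, hpq⟩ := hmem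
  obtain ⟨cp, hcp⟩ := (mem_kSq_iff (k := k) ((p : K))).mp p.2
  obtain ⟨cq, hcq⟩ := (mem_kSq_iff (k := k) ((q : K))).mp q.2
  refine ⟨cq, cp, ?_⟩
  rw [← hpq]
  have h1 : p • g = (p : K) * g := by
    rw [Algebra.smul_def, IntermediateField.algebraMap_apply]
  have h2 : q • (1:K) = (q : K) := by
    rw [Algebra.smul_def, mul_one, IntermediateField.algebraMap_apply]
  rw [h1, h2, hcp, hcq]
  ring

end StageA

set_option maxHeartbeats 1600000 in
/-- **Surjectivity of the Sugiyama–Yasuda symbol via Tsen's theorem** (Remark 4.9 of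
Kedlaya–Litt–Witaszek): let `k` be an algebraically closed field of characteristic `2`
and `K` a finitely generated field extension of transcendence degree `1` (so that
`[K : k(K²)] = 2`).  For every `g ∈ R = K \ k(K²)` and every `a ∈ K`, there is
`f ∈ R` with `SY(f, g) = da` in `Ω[K⁄k]`; here `f = f₀⁴ + f₁⁴ g + f₂⁴ g² + f₃⁴ g³`
with `fᵢ ∈ K` (since `k` is perfect, `k(K⁴) = K⁴`) and
`SY(f, g) = ((f₁f₃ + f₂²)/(f₁² + f₃² g))² • dg`. -/
theorem SY_symbol_surjective_of_algClosed
    (k K : Type*) [Field k] [IsAlgClosed k] [CharP k 2] [Field K] [Algebra k K]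
    (hfg : (⊤ : IntermediateField k K).FG)
    (htr : ∃ x : K, Transcendental k x ∧
      Algebra.IsAlgebraic (IntermediateField.adjoin k {x}) K)
    (hdeg : Module.finrank (kSq k K) K = 2)
    (g : K) (hg : g ∉ kSq k K) (a : K) :
    ∃ f : K, f ∉ kSq k K ∧ ∃ f0 f1 f2 f3 : K,
      f = f0 ^ 4 + f1 ^ 4 * g + f2 ^ 4 * g ^ 2 + f3 ^ 4 * g ^ 3 ∧
      f1 ^ 2 + f3 ^ 2 * g ≠ 0 ∧
      ((f1 * f3 + f2 ^ 2) / (f1 ^ 2 + f3 ^ 2 * g)) ^ 2 •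
          (KaehlerDifferential.D k K g : Ω[K⁄k]) =
        KaehlerDifferential.D k K a := by
  haveI : CharP K 2 := charP_of_injective_algebraMap (algebraMap k K).injective 2
  have h2K : (2 : K) = 0 := CharTwo.two_eq_zero
  obtain ⟨t, ht, halg⟩ := htr
  haveI hFD : FiniteDimensional (IntermediateField.adjoin k {t}) K := by
    obtain ⟨S, hS⟩ := hfg
    have hSalg : ∀ x ∈ (S : Set K), IsIntegral (IntermediateField.adjoin k {t}) x := fun x _ =>
      (halg.isAlgebraic x).isIntegral
    haveI : FiniteDimensional (IntermediateField.adjoin k {t})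
        (adjoin (IntermediateField.adjoin k {t}) (S : Set K)) :=
      IntermediateField.finiteDimensional_adjoin hSalg
    have htop : adjoin (IntermediateField.adjoin k {t}) (S : Set K) = ⊤ := by
      have h1 : (⊤ : IntermediateField k K) ≤ IntermediateField.restrictScalars k
          (adjoin (IntermediateField.adjoin k {t}) (S : Set K)) := by
        rw [← hS]
        apply IntermediateField.adjoin_le_iff.mpr
        intro y hy
        rw [SetLike.mem_coe, IntermediateField.mem_restrictScalars]
        exact IntermediateField.subset_adjoin _ _ hy
      rw [eq_top_iff]
      intro x _
      exact (IntermediateField.mem_restrictScalars k).mp (h1 IntermediateField.mem_top)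
    exact (((IntermediateField.equivOfEq htop).toLinearEquiv.trans
      (IntermediateField.topEquiv (F := IntermediateField.adjoin k {t})
        (E := K)).toLinearEquiv)).finiteDimensional
  obtain ⟨s₀, a₁, ha⟩ := decomp_sq hdeg hg a
  obtain ⟨f₁, f₂, f₃, hne, heq⟩ := solve_conic t ht a₁ g
  have hgns : ¬∃ y : K, g = y^2 := fun ⟨y, hy⟩ => hg ((mem_kSq_iff (k := k) g).mpr ⟨y, hy⟩)
  have hden : f₁^2 + f₃^2 * g ≠ 0 := by
    intro h0
    by_cases h3 : f₃ = 0
    · rw [h3] at h0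
      simp only [ne_eq, OfNat.ofNat_ne_zero, not_false_eq_true, zero_pow, zero_mul,
        add_zero, pow_eq_zero_iff] at h0
      rw [h0, h3] at heq
      have hf2 : f₂ = 0 := by
        have : f₂^2 = 0 := by linear_combination heq
        exact pow_eq_zero_iff (by norm_num) |>.mp this
      exact hne ⟨h0, hf2, h3⟩
    · apply hgns
      refine ⟨f₁/f₃, ?_⟩
      rw [div_pow]
      rw [eq_div_iff (pow_ne_zero 2 h3)]
      linear_combination h0 - f₁^2 * h2K
  have hc : (f₁*f₃ + f₂^2)/(f₁^2+f₃^2*g) = a₁ := by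
    rw [div_eq_iff hden]
    linear_combination heq + (-(a₁*f₁^2) - a₁*g*f₃^2) * h2K
  have hsq : ∀ x : K, KaehlerDifferential.D k K (x^2) = 0 := by
    intro x
    rw [pow_two, Derivation.leibniz, ← add_smul, CharTwo.add_self_eq_zero, zero_smul]
  refine ⟨0^4 + f₁^4*g + f₂^4*g^2 + f₃^4*g^3, ?_, 0, f₁, f₂, f₃, rfl, hden, ?_⟩
  · rw [mem_kSq_iff (k := k)]
    rintro ⟨y, hy⟩
    apply hgns
    refine ⟨(y + f₂^2*g)/(f₁^2 + f₃^2*g), ?_⟩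
    rw [div_pow, eq_div_iff (pow_ne_zero 2 hden)]
    linear_combination -hy + (f₁^4*g + f₁^2*f₃^2*g^2 + f₃^4*g^3 - y^2 - y*f₂^2*g) * h2K
  · rw [hc, ha]
    rw [map_add, hsq, Derivation.leibniz, hsq, smul_zero, zero_add, add_zero]
end
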